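/- arXiv:1210.5699 — 6 statements merged into one kernel-verified Lean document; each statement's English description precedes it below -/
import Mathlib

section
/- Let n ≥ 3 and 1 ≤ k ≤ n-1 be integers. If κ = (κ_1,…,κ_{n-1}) ∈ ℝ^{n-1} belongs to the Gårding cone Γ_k^+, then for each index i with 1 ≤ i ≤ n-1 one has σ_{k-1;i}(κ) > 0. -/
/-- The `j`-th elementary symmetric polynomial of `κ = (κ_1, …, κ_m) ∈ ℝ^m`,
with the conventions `σ_0 = 1` and `σ_j = 0` for `j > m`. -/
noncomputable def esymm (m j : ℕ) (κ : Fin m → ℝ) : ℝ :=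
  ∑ s ∈ Finset.powersetCard j (Finset.univ : Finset (Fin m)), ∏ i ∈ s, κ i

/-- `σ_{k;i}(κ)`: the `k`-th elementary symmetric polynomial of the `m - 1` numbers
`κ_1, …, κ_{i-1}, κ_{i+1}, …, κ_m`. -/
noncomputable def esymmWithout (m k : ℕ) (i : Fin m) (κ : Fin m → ℝ) : ℝ :=
  ∑ s ∈ Finset.powersetCard k ((Finset.univ : Finset (Fin m)).erase i), ∏ j ∈ s, κ j

/-- The Gårding cone `Γ_k^+ = {κ ∈ ℝ^m : σ_j(κ) > 0 for j = 1, …, k}`. -/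
def gardingCone (m k : ℕ) : Set (Fin m → ℝ) :=
  {κ | ∀ j, 1 ≤ j → j ≤ k → 0 < esymm m j κ}

namespace GardingAux

open Multiset Polynomial

lemma esymm_zero' (s : Multiset ℝ) : s.esymm 0 = 1 := by
  simp [Multiset.esymm]

lemma esymm_of_card_lt {s : Multiset ℝ} {k : ℕ} (h : Multiset.card s < k) : s.esymm k = 0 := by
  simp [Multiset.esymm, Multiset.powersetCard_eq_empty k h]

lemma esymm_cons (a : ℝ) (s : Multiset ℝ) (n : ℕ) :
    (a ::ₘ s).esymm (n + 1) = s.esymm (n + 1) + a * s.esymm n := by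
  simp only [Multiset.esymm, powersetCard_cons, Multiset.map_add, Multiset.sum_add,
    Multiset.map_map, Function.comp_def, Multiset.prod_cons]
  rw [Multiset.sum_map_mul_left]

lemma esymm_one' (s : Multiset ℝ) : s.esymm 1 = s.sum := by
  simp [Multiset.esymm, Multiset.powersetCard_one, Multiset.map_map, Function.comp_def]

lemma esymm_card (s : Multiset ℝ) : s.esymm (Multiset.card s) = s.prod := by
  induction s using Multiset.induction_on with
  | empty => simp [esymm_zero']
  | cons a t ih =>
    rw [Multiset.card_cons, esymm_cons, esymm_of_card_lt (by simp), Multiset.prod_cons, ih]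
    ring

lemma two_esymm_two (s : Multiset ℝ) :
    2 * s.esymm 2 + (s.map (fun x => x ^ 2)).sum = s.sum ^ 2 := by
  induction s using Multiset.induction_on with
  | empty => simp [esymm_of_card_lt (show Multiset.card (0 : Multiset ℝ) < 2 by simp)]
  | cons a t ih =>
    have hc := esymm_cons a t 1
    norm_num [esymm_one'] at hc
    rw [Multiset.map_cons, Multiset.sum_cons, Multiset.sum_cons, hc]
    linear_combination ih

lemma multiset_cauchy_schwarz (s : Multiset ℝ) :
    s.sum ^ 2 ≤ (Multiset.card s : ℝ) * (s.map (fun x => x ^ 2)).sum := by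
  induction s using Multiset.induction_on with
  | empty => simp
  | cons a t ih =>
    have hQ : (0:ℝ) ≤ (t.map (fun x => x ^ 2)).sum :=
      Multiset.sum_nonneg (by intro x hx; obtain ⟨y, _, rfl⟩ := Multiset.mem_map.1 hx; positivity)
    have hc : (0:ℝ) ≤ (Multiset.card t : ℝ) := by positivity
    rw [Multiset.sum_cons, Multiset.map_cons, Multiset.sum_cons, Multiset.card_cons]
    push_cast
    rcases eq_or_lt_of_le hc with h0 | h0
    · have ht : t.sum = 0 := by
        have : Multiset.card t = 0 := by exact_mod_cast h0.symm
        rw [Multiset.card_eq_zero] at this; simp [this]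
      rw [ht]
      nlinarith [hQ]
    · nlinarith [sq_nonneg (t.sum - (Multiset.card t : ℝ) * a), mul_pos h0 h0]

lemma lemA (t : Multiset ℝ) :
    ((Multiset.card t : ℝ)) ^ 2 * t.esymm 2 ≤ ((Multiset.card t).choose 2 : ℝ) * t.esymm 1 ^ 2 := by
  have h1 := two_esymm_two t
  have h2 := multiset_cauchy_schwarz t
  rw [esymm_one', Nat.cast_choose_two]
  have hc : (0:ℝ) ≤ (Multiset.card t : ℝ) := by positivity
  nlinarith [mul_nonneg hc (sub_nonneg.2 h2)]

lemma choose_id (M a : ℕ) : (M + 1) * M.choose a = (M + 1).choose a * (M + 1 - a) := by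
  rw [← Nat.choose_succ_right_eq]
  simpa [Nat.succ_eq_add_one] using Nat.add_one_mul_choose_eq M a

lemma choose_sq {M j : ℕ} (h : j + 2 ≤ M) :
    M.choose j * M.choose (j + 2) ≤ M.choose (j + 1) ^ 2 := by
  have h1 := Nat.choose_succ_right_eq M j
  have h2 := Nat.choose_succ_right_eq M (j + 1)
  have key : (M.choose j * M.choose (j + 2)) * ((M - j) * (j + 2)) ≤
      (M.choose (j + 1) ^ 2) * ((M - j) * (j + 2)) := by
    calc (M.choose j * M.choose (j + 2)) * ((M - j) * (j + 2))
        = (M.choose j * (M - j)) * (M.choose (j + 2) * (j + 2)) := by ring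
      _ = (M.choose (j + 1) * (j + 1)) * (M.choose (j + 1) * (M - (j + 1))) := by rw [h1, h2]
      _ = M.choose (j + 1) ^ 2 * ((j + 1) * (M - (j + 1))) := by ring
      _ ≤ (M.choose (j + 1) ^ 2) * ((M - j) * (j + 2)) := by
          apply Nat.mul_le_mul_left
          have : M - (j+1) ≤ M - j := by omega
          calc (j + 1) * (M - (j + 1)) ≤ (j + 2) * (M - j) :=
                Nat.mul_le_mul (by omega) this
            _ = (M - j) * (j + 2) := Nat.mul_comm _ _
  exact Nat.le_of_mul_le_mul_right key (Nat.mul_pos (by omega) (by omega))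

lemma scale_newton {c1 c2 c3 d1 d2 d3 n1 n2 n3 N e1 e2 e3 z1 z2 z3 : ℝ}
    (hn1 : 0 < n1) (hn2 : 0 < n2) (hn3 : 0 < n3)
    (hF1 : N * d1 = c1 * n1) (hF2 : N * d2 = c2 * n2) (hF3 : N * d3 = c3 * n3)
    (hE1 : N * z1 = n1 * e1) (hE2 : N * z2 = n2 * e2) (hE3 : N * z3 = n3 * e3)
    (ih : d2 ^ 2 * (z1 * z3) ≤ d1 * d3 * z2 ^ 2) :
    c2 ^ 2 * (e1 * e3) ≤ c1 * c3 * e2 ^ 2 := by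
  have hP : (0:ℝ) < n1 * n3 * n2 ^ 2 := by positivity
  apply le_of_mul_le_mul_left _ hP
  calc n1 * n3 * n2 ^ 2 * (c2 ^ 2 * (e1 * e3))
      = (c2 * n2) ^ 2 * ((n1 * e1) * (n3 * e3)) := by ring
    _ = (N * d2) ^ 2 * ((N * z1) * (N * z3)) := by rw [hF2, hE1, hE3]
    _ = N ^ 4 * (d2 ^ 2 * (z1 * z3)) := by ring
    _ ≤ N ^ 4 * (d1 * d3 * z2 ^ 2) := by
        apply mul_le_mul_of_nonneg_left ih (by positivity)
    _ = (N * d1) * (N * d3) * (N * z2) ^ 2 := by ring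
    _ = (c1 * n1) * (c3 * n3) * (n2 * e2) ^ 2 := by rw [hF1, hF3, hE2]
    _ = n1 * n3 * n2 ^ 2 * (c1 * c3 * e2 ^ 2) := by ring

lemma esymm_inv (s : Multiset ℝ) (h0 : (0:ℝ) ∉ s) :
    ∀ l, l ≤ Multiset.card s →
      s.esymm (Multiset.card s - l) = s.prod * (s.map (fun x => x⁻¹)).esymm l := by
  induction s using Multiset.induction_on with
  | empty =>
    intro l hl
    simp only [Multiset.card_zero, Nat.le_zero] at hl
    subst hl
    simp [esymm_zero']
  | cons a t ih =>
    have ha : a ≠ 0 := fun h => h0 (by simp [h])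
    have h0t : (0:ℝ) ∉ t := fun h => h0 (Multiset.mem_cons_of_mem h)
    have hmap : Multiset.map (fun x : ℝ => x⁻¹) (a ::ₘ t) = a⁻¹ ::ₘ t.map (fun x => x⁻¹) := by
      simp
    intro l hl
    rcases l with _ | l
    · simp only [Nat.sub_zero, esymm_zero', mul_one, esymm_card]
    · rw [Multiset.card_cons] at hl
      rcases eq_or_lt_of_le hl with heq | hlt
      · -- l + 1 = card t + 1, i.e. l = card t
        have hlc : l = Multiset.card t := by omega
        subst hlc
        rw [show Multiset.card (a ::ₘ t) - (Multiset.card t + 1) = 0 from by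
              rw [Multiset.card_cons]; omega, esymm_zero', hmap,
          show Multiset.card t + 1 = Multiset.card (a⁻¹ ::ₘ t.map (fun x => x⁻¹)) from by simp,
          esymm_card, Multiset.prod_cons, Multiset.prod_cons, Multiset.prod_map_inv]
        have hp : t.prod ≠ 0 := Multiset.prod_ne_zero h0t
        field_simp
        simp [hp]
      · -- l + 1 ≤ card t
        have hl' : l + 1 ≤ Multiset.card t := by omega
        have ih1 := ih h0t (l + 1) hl'
        have ih2 := ih h0t l (by omega)
        rw [show Multiset.card (a ::ₘ t) - (l + 1) = (Multiset.card t - (l + 1)) + 1 from by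
              rw [Multiset.card_cons]; omega, esymm_cons,
          show Multiset.card t - (l + 1) + 1 = Multiset.card t - l from by omega,
          hmap, esymm_cons, Multiset.prod_cons, ih2, ih1]
        field_simp
        ring

lemma deriv_esymm (s : Multiset ℝ) (hs : 1 ≤ Multiset.card s) :
    ∃ z : Multiset ℝ, Multiset.card z = Multiset.card s - 1 ∧
      ∀ a, a ≤ Multiset.card s - 1 →
        (Multiset.card s : ℝ) * z.esymm a = ((Multiset.card s - a : ℕ) : ℝ) * s.esymm a := by
  set M := Multiset.card s with hM
  set f : ℝ[X] := (s.map (fun r => X + C r)).prod with hf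
  have hdeg : f.natDegree = M := by
    rw [hf, natDegree_multiset_prod_of_monic _ (fun p hp => by
      obtain ⟨r, _, rfl⟩ := Multiset.mem_map.1 hp; exact monic_X_add_C r)]
    simp [Multiset.map_map, Function.comp_def, natDegree_X_add_C]
    exact hM.symm
  have hroots : f.roots = s.map (fun r => -r) := by
    have : f = ((s.map (fun r => -r)).map (fun r => X - C r)).prod := by
      rw [hf, Multiset.map_map]
      congr 1
      apply Multiset.map_congr rfl
      intro x _
      simp [sub_neg_eq_add]
    rw [this, roots_multiset_prod_X_sub_C]
  have hcard_roots : Multiset.card f.roots = M := by rw [hroots, Multiset.card_map]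
  set g := derivative f with hg
  have hfcoeff : ∀ a, a ≤ M → f.coeff (M - a) = s.esymm a := by
    intro a ha
    rw [hf, Multiset.prod_X_add_C_coeff s (by omega)]
    congr 1
    omega
  have hgcoeff : ∀ a, a ≤ M - 1 → g.coeff (M - 1 - a) = ((M - a : ℕ) : ℝ) * s.esymm a := by
    intro a ha
    rw [hg, coeff_derivative, show M - 1 - a + 1 = M - a from by omega, hfcoeff a (by omega)]
    rw [show ((M - 1 - a : ℕ) : ℝ) + 1 = ((M - a : ℕ) : ℝ) from by
      rw [show M - a = (M - 1 - a) + 1 from by omega]; push_cast; ring]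
    ring
  have hgtop : g.coeff (M - 1) = (M : ℝ) := by
    have h0 := hgcoeff 0 (by omega)
    simp only [Nat.sub_zero] at h0
    rw [h0, esymm_zero', mul_one]
  have hMpos : (0:ℝ) < (M : ℝ) := by exact_mod_cast hs
  have hgne : g ≠ 0 := by
    intro h
    rw [h, coeff_zero] at hgtop
    exact hMpos.ne hgtop
  have h1 := Polynomial.card_roots_le_derivative f
  have h2 : g.natDegree ≤ M - 1 := by
    have := Polynomial.natDegree_derivative_le f
    rwa [hdeg] at this
  have h3 := Polynomial.card_roots' g
  rw [hcard_roots, ← hg] at h1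
  have hcg : Multiset.card g.roots = M - 1 := by omega
  have hndg : g.natDegree = M - 1 := by omega
  have hlead : g.leadingCoeff = (M : ℝ) := by rw [Polynomial.leadingCoeff, hndg]; exact hgtop
  set z := g.roots.map (fun r => -r) with hz
  have hzc : Multiset.card z = M - 1 := by rw [hz, Multiset.card_map, hcg]
  have hfact : g = C (M : ℝ) * (z.map (fun r => X + C r)).prod := by
    conv_lhs => rw [← Polynomial.C_leadingCoeff_mul_prod_multiset_X_sub_C (hcg.trans hndg.symm)]
    rw [hlead]
    congr 1
    rw [hz, Multiset.map_map]
    congr 1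
    apply Multiset.map_congr rfl
    intro x _
    simp [sub_eq_add_neg]
  refine ⟨z, hzc, fun a ha => ?_⟩
  have hzcoeff : g.coeff (M - 1 - a) = (M : ℝ) * z.esymm a := by
    rw [hfact, coeff_C_mul, Multiset.prod_X_add_C_coeff z (by rw [hzc]; omega)]
    rw [hzc, show M - 1 - (M - 1 - a) = a from by omega]
  rw [← hzcoeff]
  exact hgcoeff a ha

theorem newton :
    ∀ (M : ℕ) (s : Multiset ℝ), Multiset.card s = M → ∀ j, j + 2 ≤ M →
      ((M.choose (j + 1) : ℝ)) ^ 2 * (s.esymm j * s.esymm (j + 2)) ≤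
        ((M.choose j : ℝ)) * ((M.choose (j + 2) : ℝ)) * s.esymm (j + 1) ^ 2 := by
  intro M
  induction M with
  | zero => intro s hs j hj; omega
  | succ M ih =>
    intro s hs j hj
    rcases Nat.eq_zero_or_pos j with rfl | hj0
    · -- base case j = 0 : Cauchy-Schwarz
      have hA := lemA s
      rw [hs] at hA
      rw [esymm_zero', Nat.choose_one_right, Nat.choose_zero_right]
      push_cast at hA ⊢
      nlinarith [hA]
    rcases eq_or_lt_of_le hj with htop | hmid
    · -- top case : j + 2 = M + 1
      obtain rfl : M = j + 1 := by omega
      by_cases h0 : (0:ℝ) ∈ s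
      · have hp : s.esymm (j + 2) = 0 := by
          rw [show j + 2 = Multiset.card s from by omega, esymm_card]
          exact Multiset.prod_eq_zero h0
        rw [hp]
        simp only [mul_zero]
        positivity
      · set w := s.map (fun x : ℝ => x⁻¹) with hw
        have hcs : Multiset.card s = j + 2 := by omega
        have i2' : s.esymm j = s.prod * w.esymm 2 := by
          have := esymm_inv s h0 2 (by omega)
          rwa [show Multiset.card s - 2 = j from by omega] at this
        have i1' : s.esymm (j + 1) = s.prod * w.esymm 1 := by
          have := esymm_inv s h0 1 (by omega)
          rwa [show Multiset.card s - 1 = j + 1 from by omega] at this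
        have i0' : s.esymm (j + 2) = s.prod := by
          have := esymm_card s
          rwa [hcs] at this
        have hA := lemA w
        rw [show Multiset.card w = j + 2 from by rw [hw, Multiset.card_map]; omega] at hA
        have hc1 : (j + 1 + 1).choose (j + 1) = j + 2 := by
          simp [Nat.choose_succ_self_right]
        have hc2 : (j + 1 + 1).choose j = (j + 2).choose 2 := by
          have h := Nat.choose_symm (show j ≤ j + 2 from by omega)
          rw [show j + 2 - j = 2 from by omega] at h
          rw [show j + 1 + 1 = j + 2 from rfl]
          exact h.symm
        rw [i0', i1', i2', hc1, hc2, Nat.choose_self]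
        push_cast at hA ⊢
        nlinarith [mul_le_mul_of_nonneg_left hA (sq_nonneg s.prod)]
    · -- middle case : j + 2 ≤ M
      obtain ⟨z, hzc, hzE⟩ := deriv_esymm s (by omega)
      rw [hs] at hzc hzE
      have hzc' : Multiset.card z = M := by omega
      have ihz := ih z hzc' j (by omega)
      have E1 := hzE j (by omega)
      have E2 := hzE (j + 1) (by omega)
      have E3 := hzE (j + 2) (by omega)
      have F1 : ((M + 1 : ℕ) : ℝ) * (M.choose j : ℝ) =
          ((M + 1).choose j : ℝ) * ((M + 1 - j : ℕ) : ℝ) := by exact_mod_cast choose_id M j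
      have F2 : ((M + 1 : ℕ) : ℝ) * (M.choose (j + 1) : ℝ) =
          ((M + 1).choose (j + 1) : ℝ) * ((M + 1 - (j + 1) : ℕ) : ℝ) := by
        exact_mod_cast choose_id M (j + 1)
      have F3 : ((M + 1 : ℕ) : ℝ) * (M.choose (j + 2) : ℝ) =
          ((M + 1).choose (j + 2) : ℝ) * ((M + 1 - (j + 2) : ℕ) : ℝ) := by
        exact_mod_cast choose_id M (j + 2)
      have hn1 : (0:ℝ) < ((M + 1 - j : ℕ) : ℝ) := by
        have : 0 < M + 1 - j := by omega
        exact_mod_cast this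
      have hn2 : (0:ℝ) < ((M + 1 - (j + 1) : ℕ) : ℝ) := by
        have : 0 < M + 1 - (j + 1) := by omega
        exact_mod_cast this
      have hn3 : (0:ℝ) < ((M + 1 - (j + 2) : ℕ) : ℝ) := by
        have : 0 < M + 1 - (j + 2) := by omega
        exact_mod_cast this
      exact scale_newton hn1 hn2 hn3 F1 F2 F3 E1 E2 E3 ihz

lemma esymm_eq (m j : ℕ) (κ : Fin m → ℝ) :
    esymm m j κ = ((Finset.univ.val : Multiset (Fin m)).map κ).esymm j :=
  (Finset.esymm_map_val κ Finset.univ j).symm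

lemma esymmWithout_eq (m k : ℕ) (i : Fin m) (κ : Fin m → ℝ) :
    esymmWithout m k i κ = (((Finset.univ : Finset (Fin m)).erase i).val.map κ).esymm k :=
  (Finset.esymm_map_val κ _ k).symm

lemma cons_univ {m : ℕ} (i : Fin m) (κ : Fin m → ℝ) :
    ((Finset.univ.val : Multiset (Fin m)).map κ) =
      κ i ::ₘ (((Finset.univ : Finset (Fin m)).erase i).val.map κ) := by
  rw [Finset.erase_val, ← Multiset.map_cons,
    Multiset.cons_erase (Finset.mem_univ i : i ∈ Finset.univ)]

lemma decomp (m j : ℕ) (i : Fin m) (κ : Fin m → ℝ) :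
    esymm m (j + 1) κ = esymmWithout m (j + 1) i κ + κ i * esymmWithout m j i κ := by
  rw [esymm_eq, esymmWithout_eq, esymmWithout_eq, cons_univ i κ, esymm_cons]

lemma card_without {m : ℕ} (i : Fin m) (κ : Fin m → ℝ) :
    Multiset.card ((((Finset.univ : Finset (Fin m)).erase i)).val.map κ) = m - 1 := by
  rw [Multiset.card_map, ← Finset.card_def, Finset.card_erase_of_mem (Finset.mem_univ i),
    Finset.card_univ, Fintype.card_fin]

theorem main_aux (m : ℕ) : ∀ (k' : ℕ) (κ : Fin m → ℝ), κ ∈ gardingCone m (k' + 1) →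
    k' + 1 ≤ m → ∀ i : Fin m, 0 < esymmWithout m k' i κ := by
  intro k'
  induction k' with
  | zero =>
    intro κ _ _ i
    simp [esymmWithout, Finset.powersetCard_zero]
  | succ k' ih =>
    intro κ hκ hm i
    have hκ' : κ ∈ gardingCone m (k' + 1) := fun j h1 h2 => hκ j h1 (by omega)
    have hA : 0 < esymmWithout m k' i κ := ih κ hκ' (by omega) i
    by_contra hB'
    push_neg at hB'
    set A := esymmWithout m k' i κ with hAdef
    set B := esymmWithout m (k' + 1) i κ with hBdef
    set D := esymmWithout m (k' + 2) i κ with hDdef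
    have hσ1 : 0 < B + κ i * A := by
      have h := hκ (k' + 1) (by omega) (by omega)
      rwa [decomp m k' i κ] at h
    have hd2 : esymm m (k' + 2) κ = D + κ i * B := decomp m (k' + 1) i κ
    have hσ2 : 0 < D + κ i * B := by
      have h := hκ (k' + 2) (by omega) (by omega)
      rwa [hd2] at h
    have hAD : B ^ 2 < A * D := by
      nlinarith [mul_nonneg hσ1.le (neg_nonneg.2 hB'), mul_pos hσ2 hA]
    have hyc := card_without i κ
    rcases le_or_gt (k' + 2) (m - 1) with hle | hgt
    · have hN := newton (m - 1) _ hyc k' hle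
      rw [← esymmWithout_eq m k' i κ, ← hAdef] at hN
      rw [← esymmWithout_eq m (k' + 1) i κ, ← hBdef] at hN
      rw [← esymmWithout_eq m (k' + 2) i κ, ← hDdef] at hN
      have hlc : ((m - 1).choose k' : ℝ) * ((m - 1).choose (k' + 2) : ℝ) ≤
          (((m - 1).choose (k' + 1) : ℝ)) ^ 2 := by exact_mod_cast choose_sq hle
      have hc2pos : (0:ℝ) < (((m - 1).choose (k' + 1) : ℕ) : ℝ) ^ 2 := by
        have : 0 < (m - 1).choose (k' + 1) := Nat.choose_pos (by omega)
        positivity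
      nlinarith [hN, mul_le_mul_of_nonneg_right hlc (sq_nonneg B),
        mul_lt_mul_of_pos_left hAD hc2pos]
    · have hD : D = 0 := by
        rw [hDdef, esymmWithout_eq]
        exact esymm_of_card_lt (by omega : Multiset.card _ < k' + 2)
      rw [hD] at hAD
      nlinarith [sq_nonneg B, hAD, hA]

end GardingAux

/-- If `κ ∈ Γ_k^+` then `σ_{k-1;i}(κ) > 0` for each index `i`. -/
theorem stmt_0 (n k : ℕ) (hn : 3 ≤ n) (hk1 : 1 ≤ k) (hk2 : k ≤ n - 1)
    (κ : Fin (n - 1) → ℝ) (hκ : κ ∈ gardingCone (n - 1) k) (i : Fin (n - 1)) :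
    0 < esymmWithout (n - 1) (k - 1) i κ := by
  obtain ⟨k', rfl⟩ : ∃ k', k = k' + 1 := ⟨k - 1, by omega⟩
  have := GardingAux.main_aux (n - 1) k' κ hκ (by omega) i
  simpa using this
end

section
/- Let n ≥ 3 and 1 ≤ k ≤ n-1 be integers. If κ = (κ_1,…,κ_{n-1}) ∈ ℝ^{n-1} belongs to the Gårding cone Γ_k^+, then for every j with 1 ≤ j ≤ k one has the Maclaurin-type inequality σ_{j-1}(κ) ≥ (j/(n-j)) · (binom(n-1, j))^{1/j} · σ_j(κ)^{(j-1)/j}. -/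
open Polynomial


lemma mySplits_derivative (p : ℝ[X]) (hp : p.Splits) :
    (derivative p).Splits := by
  by_cases h0 : derivative p = 0
  · rw [h0]; exact Splits.zero
  have hd0 : p.natDegree ≠ 0 := by
    intro h
    exact h0 (derivative_of_natDegree_zero h)
  rw [splits_iff_card_roots] at hp ⊢
  have h1 := p.card_roots_le_derivative
  have h2 : Multiset.card (derivative p).roots ≤ (derivative p).natDegree :=
    (derivative p).card_roots'
  have h3 : (derivative p).natDegree ≤ p.natDegree - 1 := natDegree_derivative_le p
  omega

lemma mySplits_iterate_derivative (p : ℝ[X]) (hp : p.Splits) (k : ℕ) :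
    (derivative^[k] p).Splits := by
  induction k with
  | zero => exact hp
  | succ k ih => rw [Function.iterate_succ_apply']; exact mySplits_derivative _ ih

lemma mySplits_reverse_aux (a : ℝ) (s : Multiset ℝ) :
    (C a * (s.map fun r => X - C r).prod).reverse.Splits := by
  induction s using Multiset.induction with
  | empty =>
    simp only [Multiset.map_zero, Multiset.prod_zero, mul_one]
    exact Splits.of_natDegree_le_one ((C a).reverse_natDegree_le.trans (by simp))
  | cons r s ih =>
    rw [Multiset.map_cons, Multiset.prod_cons, mul_left_comm, reverse_mul_of_domain]
    exact Splits.mul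
      (Splits.of_natDegree_le_one ((X - C r).reverse_natDegree_le.trans (by simp))) ih

lemma mySplits_reverse (p : ℝ[X]) (hp : p.Splits) :
    p.reverse.Splits := by
  by_cases h0 : p = 0
  · simp [h0]
  rw [hp.eq_prod_roots]
  exact mySplits_reverse_aux _ _

lemma myDiscrim_nonneg (Q : ℝ[X]) (hs : Q.Splits) (hd : Q.natDegree ≤ 2) :
    4 * (Q.coeff 0 * Q.coeff 2) ≤ Q.coeff 1 ^ 2 := by
  by_cases h2 : Q.coeff 2 = 0
  · rw [h2]; nlinarith [sq_nonneg (Q.coeff 1)]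
  have hdeg : Q.degree ≠ 0 := by
    intro h
    have : Q.natDegree = 0 := natDegree_eq_zero_iff_degree_le_zero.mpr (le_of_eq h)
    exact h2 (Q.coeff_eq_zero_of_natDegree_lt (by omega))
  obtain ⟨x, hx⟩ := hs.exists_eval_eq_zero hdeg
  have hx' : Q.eval x = 0 := hx
  have hev : Q.eval x = ∑ i ∈ Finset.range 3, Q.coeff i * x ^ i :=
    eval_eq_sum_range' (by omega) x
  rw [hx'] at hev
  simp [Finset.sum_range_succ] at hev
  have h3 : Q.coeff 0 = -(Q.coeff 1 * x) - Q.coeff 2 * x ^ 2 := by linarith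
  rw [h3]
  nlinarith [sq_nonneg (Q.coeff 1 + 2 * Q.coeff 2 * x)]

lemma myDescFactorial_mul_factorial {n k : ℕ} (h : k ≤ n) :
    n.descFactorial k * (n - k).factorial = n.factorial := by
  rw [Nat.descFactorial_eq_factorial_mul_choose, mul_comm (k.factorial),
    mul_assoc, ← mul_assoc, Nat.choose_mul_factorial_mul_factorial h]

lemma myDescCast {n k : ℕ} (h : k ≤ n) :
    ((n.descFactorial k : ℕ) : ℝ) = (n.factorial : ℝ) / ((n - k).factorial : ℝ) := by
  rw [eq_div_iff (by exact_mod_cast (n - k).factorial_pos.ne')]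
  exact_mod_cast congrArg (Nat.cast : ℕ → ℝ) (myDescFactorial_mul_factorial h)

lemma myDescFactorial_pos {n k : ℕ} (h : k ≤ n) : 0 < n.descFactorial k := by
  rcases Nat.eq_zero_or_pos (n.descFactorial k) with h0 | h0
  · have := myDescFactorial_mul_factorial h
    rw [h0, zero_mul] at this
    exact absurd this.symm n.factorial_pos.ne'
  · exact h0

noncomputable def pnorm (m : ℕ) (κ : Fin m → ℝ) (t : ℕ) : ℝ :=
  esymm m t κ * (t.factorial * (m - t).factorial) / m.factorial

lemma myNewton (m : ℕ) (κ : Fin m → ℝ) (i : ℕ) (h1 : 1 ≤ i) (h2 : i + 1 ≤ m) :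
    pnorm m κ (i - 1) * pnorm m κ (i + 1) ≤ pnorm m κ i ^ 2 := by
  set P : ℝ[X] := ∏ a : Fin m, (X + C (κ a)) with hP
  have hmon : P.Monic := monic_prod_of_monic _ _ fun a _ => monic_X_add_C (κ a)
  have hdegP : P.natDegree = m := by
    rw [hP, natDegree_prod_of_monic _ _ fun a _ => monic_X_add_C (κ a)]
    simp [natDegree_X_add_C]
  have hsplitP : P.Splits :=
    Splits.prod fun a _ => Splits.of_natDegree_le_one (le_of_eq (natDegree_X_add_C (κ a)))
  have hcoeff : ∀ t, t ≤ m → P.coeff (m - t) = esymm m t κ := by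
    intro t ht
    have hcard : (Finset.univ : Finset (Fin m)).card = m := by simp
    rw [hP, Finset.prod_X_add_C_coeff _ κ (by rw [hcard]; omega), esymm]
    congr 1
    rw [hcard]
    congr 1
    omega
  set D : ℝ[X] := derivative^[m - i - 1] P with hD
  have hcoeffD : ∀ b, D.coeff b =
      ((b + (m - i - 1)).descFactorial (m - i - 1) : ℝ) * P.coeff (b + (m - i - 1)) := by
    intro b
    rw [hD, coeff_iterate_derivative, nsmul_eq_mul]
  have hdegD : D.natDegree = i + 1 := by
    have hle : D.natDegree ≤ i + 1 := (natDegree_iterate_derivative P _).trans (by omega)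
    have hne : D.coeff (i + 1) ≠ 0 := by
      rw [hcoeffD]
      have e : i + 1 + (m - i - 1) = m := by omega
      rw [e, ← hdegP, hmon.coeff_natDegree]
      have := myDescFactorial_pos (n := m) (k := m - i - 1) (by omega)
      rw [hdegP]
      positivity
    exact le_antisymm hle (le_natDegree_of_ne_zero hne)
  set R : ℝ[X] := D.reverse with hR
  set Q : ℝ[X] := derivative^[i - 1] R with hQ
  have hsplitQ : Q.Splits :=
    mySplits_iterate_derivative _ (mySplits_reverse _ (mySplits_iterate_derivative _ hsplitP _)) _
  have hdegQ : Q.natDegree ≤ 2 := by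
    have ha := natDegree_iterate_derivative R (i - 1)
    rw [← hQ] at ha
    have h' : R.natDegree ≤ i + 1 := hdegD ▸ D.reverse_natDegree_le
    omega
  have hcoeffQ : ∀ t, t ≤ 2 → Q.coeff t =
      ((t + (i - 1)).descFactorial (i - 1) : ℝ) *
        (((2 - t + (m - i - 1)).descFactorial (m - i - 1) : ℝ) * P.coeff (2 - t + (m - i - 1))) := by
    intro t ht
    rw [hQ, coeff_iterate_derivative, nsmul_eq_mul, hR, coeff_reverse, hdegD,
      revAt_le (by omega)]
    have e : i + 1 - (t + (i - 1)) = 2 - t := by omega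
    rw [e, hcoeffD]
  have key := myDiscrim_nonneg Q hsplitQ hdegQ
  rw [hcoeffQ 0 (by omega), hcoeffQ 1 (by omega), hcoeffQ 2 (by omega)] at key
  norm_num at key
  have hs1 : P.coeff (2 + (m - i - 1)) = esymm m (i - 1) κ := by
    rw [show 2 + (m - i - 1) = m - (i - 1) by omega]; exact hcoeff _ (by omega)
  have hs2 : P.coeff (1 + (m - i - 1)) = esymm m i κ := by
    rw [show 1 + (m - i - 1) = m - i by omega]; exact hcoeff _ (by omega)
  have hs3 : P.coeff (m - i - 1) = esymm m (i + 1) κ := by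
    rw [show m - i - 1 = m - (i + 1) by omega]; exact hcoeff _ (by omega)
  have hd1 : (((i - 1).descFactorial (i - 1) : ℕ) : ℝ) = (i - 1).factorial := by
    rw [Nat.descFactorial_self]
  have hd6 : (((m - i - 1).descFactorial (m - i - 1) : ℕ) : ℝ) = (m - i - 1).factorial := by
    rw [Nat.descFactorial_self]
  have hd2 : (((2 + (m - i - 1)).descFactorial (m - i - 1) : ℕ) : ℝ) =
      ((m - i + 1).factorial : ℝ) / 2 := by
    rw [myDescCast (by omega), Nat.add_sub_cancel, show 2 + (m - i - 1) = m - i + 1 by omega,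
      Nat.factorial_two]
    norm_num
  have hd5 : (((2 + (i - 1)).descFactorial (i - 1) : ℕ) : ℝ) =
      ((i + 1).factorial : ℝ) / 2 := by
    rw [myDescCast (by omega), Nat.add_sub_cancel, show 2 + (i - 1) = i + 1 by omega,
      Nat.factorial_two]
    norm_num
  have hd3 : (((1 + (i - 1)).descFactorial (i - 1) : ℕ) : ℝ) = (i.factorial : ℝ) := by
    rw [myDescCast (by omega), Nat.add_sub_cancel, show 1 + (i - 1) = i by omega,
      Nat.factorial_one]
    norm_num
  have hd4 : (((1 + (m - i - 1)).descFactorial (m - i - 1) : ℕ) : ℝ) = ((m - i).factorial : ℝ) := by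
    rw [myDescCast (by omega), Nat.add_sub_cancel, show 1 + (m - i - 1) = m - i by omega,
      Nat.factorial_one]
    norm_num
  rw [hs1, hs2, hs3, hd1, hd2, hd3, hd4, hd5, hd6] at key
  simp only [pnorm]
  rw [show m - (i - 1) = m - i + 1 by omega, show m - (i + 1) = m - i - 1 by omega]
  have hM : (0 : ℝ) < (m.factorial : ℝ) := by exact_mod_cast m.factorial_pos
  rw [div_mul_div_comm, div_pow, div_le_div_iff₀ (by positivity) (by positivity)]
  have key2 := mul_le_mul_of_nonneg_right key (by positivity : (0:ℝ) ≤ (m.factorial : ℝ) ^ 2)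
  nlinarith [key2]

lemma esymm_zero (m : ℕ) (κ : Fin m → ℝ) : esymm m 0 κ = 1 := by
  simp [esymm]

lemma pnorm_zero (m : ℕ) (κ : Fin m → ℝ) : pnorm m κ 0 = 1 := by
  have : (0:ℝ) < (m.factorial : ℝ) := by exact_mod_cast m.factorial_pos
  rw [pnorm, esymm_zero]
  field_simp
  simp

lemma pnorm_pos (m k : ℕ) (κ : Fin m → ℝ)
    (hκ : ∀ j, 1 ≤ j → j ≤ k → 0 < esymm m j κ) (t : ℕ) (ht : t ≤ k) : 0 < pnorm m κ t := by
  rcases Nat.eq_zero_or_pos t with rfl | h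
  · rw [pnorm_zero]; norm_num
  · have hσ := hκ t h ht
    have h1 : (0:ℝ) < (t.factorial : ℝ) := by exact_mod_cast t.factorial_pos
    have h2 : (0:ℝ) < ((m - t).factorial : ℝ) := by exact_mod_cast (m - t).factorial_pos
    have h3 : (0:ℝ) < (m.factorial : ℝ) := by exact_mod_cast m.factorial_pos
    rw [pnorm]
    positivity

lemma myMaclaurin (m k : ℕ) (κ : Fin m → ℝ) (hk : k ≤ m)
    (hκ : ∀ j, 1 ≤ j → j ≤ k → 0 < esymm m j κ) :
    ∀ j, j + 1 ≤ k → pnorm m κ (j + 1) ^ j ≤ pnorm m κ j ^ (j + 1) := by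
  intro j
  induction j with
  | zero => intro _; simp [pnorm_zero]
  | succ j ih =>
    intro hj
    have ihj := ih (by omega)
    have hnewton := myNewton m κ (j + 1) (by omega) (by omega)
    rw [Nat.add_sub_cancel] at hnewton
    have p0 := pnorm_pos m k κ hκ j (by omega)
    have p1 := pnorm_pos m k κ hκ (j + 1) (by omega)
    have p2 := pnorm_pos m k κ hκ (j + 1 + 1) (by omega)
    have h1 : pnorm m κ (j + 1 + 1) ≤ pnorm m κ (j + 1) ^ 2 / pnorm m κ j := by
      rw [le_div_iff₀ p0]
      nlinarith [hnewton]
    calc pnorm m κ (j + 1 + 1) ^ (j + 1)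
        ≤ (pnorm m κ (j + 1) ^ 2 / pnorm m κ j) ^ (j + 1) := pow_le_pow_left₀ p2.le h1 _
      _ = pnorm m κ (j + 1) ^ (2 * (j + 1)) / pnorm m κ j ^ (j + 1) := by
          rw [div_pow, pow_mul]
      _ ≤ pnorm m κ (j + 1) ^ (2 * (j + 1)) / pnorm m κ (j + 1) ^ j := by
          apply div_le_div_of_nonneg_left (by positivity) (by positivity) ihj
      _ = pnorm m κ (j + 1) ^ (j + 1 + 1) := by
          rw [div_eq_iff (by positivity), ← pow_add]
          congr 1
          omega

/-- Maclaurin-type inequality on the Gårding cone. -/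
theorem stmt_1 (n k : ℕ) (hn : 3 ≤ n) (hk1 : 1 ≤ k) (hk2 : k ≤ n - 1)
    (κ : Fin (n - 1) → ℝ) (hκ : κ ∈ gardingCone (n - 1) k)
    (j : ℕ) (hj1 : 1 ≤ j) (hj2 : j ≤ k) :
    esymm (n - 1) (j - 1) κ ≥
      ((j : ℝ) / ((n : ℝ) - j)) * ((Nat.choose (n - 1) j : ℝ)) ^ ((1 : ℝ) / j) *
        (esymm (n - 1) j κ) ^ (((j : ℝ) - 1) / j) := by
  have hκ : ∀ j, 1 ≤ j → j ≤ k → 0 < esymm (n - 1) j κ := hκ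
  obtain ⟨j', rfl⟩ : ∃ j', j = j' + 1 := ⟨j - 1, by omega⟩
  rw [Nat.add_sub_cancel]
  have hjm : j' + 1 ≤ n - 1 := le_trans hj2 hk2
  have hσ : 0 < esymm (n - 1) (j' + 1) κ := hκ _ (by omega) hj2
  have hσ0 : 0 < esymm (n - 1) j' κ := by
    rcases Nat.eq_zero_or_pos j' with rfl | h
    · rw [esymm_zero]; norm_num
    · exact hκ _ h (by omega)
  have hJ : (0 : ℝ) < ((j' + 1 : ℕ) : ℝ) := by exact_mod_cast Nat.succ_pos j'
  have hnJ : (0 : ℝ) < (n : ℝ) - ((j' + 1 : ℕ) : ℝ) := by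
    have : ((j' + 1 : ℕ) : ℝ) < (n : ℝ) := by exact_mod_cast (by omega : j' + 1 < n)
    linarith
  have hC1 : (0 : ℝ) < ((n - 1).choose (j' + 1) : ℝ) := by
    exact_mod_cast Nat.choose_pos hjm
  have hC0 : (0 : ℝ) < ((n - 1).choose j' : ℝ) := by
    exact_mod_cast Nat.choose_pos (by omega : j' ≤ n - 1)
  have hMfact : (0 : ℝ) < ((n - 1).factorial : ℝ) := by exact_mod_cast (n - 1).factorial_pos
  -- the three `pnorm` identities
  have hCF1 : (((n - 1).choose (j' + 1) : ℕ) : ℝ) *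
      (((j' + 1).factorial : ℝ) * ((n - 1 - (j' + 1)).factorial : ℝ)) = ((n - 1).factorial : ℝ) := by
    exact_mod_cast congrArg (Nat.cast : ℕ → ℝ)
      (by rw [← mul_assoc]; exact Nat.choose_mul_factorial_mul_factorial hjm)
  have hCF0 : (((n - 1).choose j' : ℕ) : ℝ) *
      ((j'.factorial : ℝ) * ((n - 1 - j').factorial : ℝ)) = ((n - 1).factorial : ℝ) := by
    exact_mod_cast congrArg (Nat.cast : ℕ → ℝ)
      (by rw [← mul_assoc]; exact Nat.choose_mul_factorial_mul_factorial (by omega : j' ≤ n - 1))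
  have hpn1 : pnorm (n - 1) κ (j' + 1) =
      esymm (n - 1) (j' + 1) κ / ((n - 1).choose (j' + 1) : ℝ) := by
    rw [pnorm, div_eq_div_iff hMfact.ne' hC1.ne']
    push_cast
    push_cast at hCF1
    linear_combination esymm (n - 1) (j' + 1) κ * hCF1
  have hpn0 : pnorm (n - 1) κ j' =
      esymm (n - 1) j' κ / ((n - 1).choose j' : ℝ) := by
    rw [pnorm, div_eq_div_iff hMfact.ne' hC0.ne']
    push_cast
    push_cast at hCF0
    linear_combination esymm (n - 1) j' κ * hCF0
  -- ratio identity
  have hcast : ((n - 1 - j' : ℕ) : ℝ) = (n : ℝ) - ((j' + 1 : ℕ) : ℝ) := by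
    have h1 : (n - 1 - j' : ℕ) = n - (j' + 1) := by omega
    rw [h1, Nat.cast_sub (by omega : j' + 1 ≤ n)]
  have hnat := Nat.choose_succ_right_eq (n - 1) j'
  have hnatcast : (((n - 1).choose (j' + 1) : ℕ) : ℝ) * ((j' + 1 : ℕ) : ℝ) =
      (((n - 1).choose j' : ℕ) : ℝ) * ((n : ℝ) - ((j' + 1 : ℕ) : ℝ)) := by
    rw [← hcast]
    exact_mod_cast congrArg (Nat.cast : ℕ → ℝ) hnat
  have hratio : ((j' + 1 : ℕ) : ℝ) / ((n : ℝ) - ((j' + 1 : ℕ) : ℝ)) *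
      ((n - 1).choose (j' + 1) : ℝ) = ((n - 1).choose j' : ℝ) := by
    rw [div_mul_eq_mul_div, div_eq_iff hnJ.ne']
    linarith [hnatcast]
  -- Maclaurin
  have hMac := myMaclaurin (n - 1) k κ hk2 hκ j' hj2
  rw [hpn1, hpn0] at hMac
  -- reduce to j-th powers
  rw [ge_iff_le, ← pow_le_pow_iff_left₀ (by positivity) hσ0.le (by omega : j' + 1 ≠ 0)]
  have hBpow : (((j' + 1 : ℕ) : ℝ) / ((n : ℝ) - ((j' + 1 : ℕ) : ℝ)) *
        (((n - 1).choose (j' + 1) : ℝ)) ^ ((1 : ℝ) / ((j' + 1 : ℕ) : ℝ)) *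
        (esymm (n - 1) (j' + 1) κ) ^ ((((j' + 1 : ℕ) : ℝ) - 1) / ((j' + 1 : ℕ) : ℝ))) ^ (j' + 1)
      = (((j' + 1 : ℕ) : ℝ) / ((n : ℝ) - ((j' + 1 : ℕ) : ℝ))) ^ (j' + 1) *
        (((n - 1).choose (j' + 1) : ℝ)) * (esymm (n - 1) (j' + 1) κ) ^ j' := by
    rw [mul_pow, mul_pow]
    congr 1
    · congr 1
      rw [← Real.rpow_natCast ((((n - 1).choose (j' + 1) : ℝ)) ^ ((1 : ℝ) / ((j' + 1 : ℕ) : ℝ)))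
        (j' + 1), ← Real.rpow_mul hC1.le, one_div, inv_mul_cancel₀ hJ.ne', Real.rpow_one]
    · rw [← Real.rpow_natCast ((esymm (n - 1) (j' + 1) κ) ^
        ((((j' + 1 : ℕ) : ℝ) - 1) / ((j' + 1 : ℕ) : ℝ))) (j' + 1),
        ← Real.rpow_mul hσ.le, div_mul_cancel₀ _ hJ.ne',
        show ((j' + 1 : ℕ) : ℝ) - 1 = ((j' : ℕ) : ℝ) by push_cast; ring,
        Real.rpow_natCast]
  rw [hBpow, div_pow, div_mul_eq_mul_div, div_mul_eq_mul_div, div_le_iff₀ (pow_pos hnJ _)]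
  have hMac2 : esymm (n - 1) (j' + 1) κ ^ j' * ((n - 1).choose j' : ℝ) ^ (j' + 1) ≤
      esymm (n - 1) j' κ ^ (j' + 1) * ((n - 1).choose (j' + 1) : ℝ) ^ j' := by
    rw [div_pow, div_pow, div_le_div_iff₀ (by positivity) (by positivity)] at hMac
    exact hMac
  rw [← mul_le_mul_iff_of_pos_right (pow_pos hC1 j')]
  calc ((j' + 1 : ℕ) : ℝ) ^ (j' + 1) * ((n - 1).choose (j' + 1) : ℝ) *
        esymm (n - 1) (j' + 1) κ ^ j' * ((n - 1).choose (j' + 1) : ℝ) ^ j'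
      = (((n - 1).choose (j' + 1) : ℝ) * ((j' + 1 : ℕ) : ℝ)) ^ (j' + 1) *
          esymm (n - 1) (j' + 1) κ ^ j' := by
        rw [mul_pow]; ring
    _ = (((n - 1).choose j' : ℝ) * ((n : ℝ) - ((j' + 1 : ℕ) : ℝ))) ^ (j' + 1) *
          esymm (n - 1) (j' + 1) κ ^ j' := by rw [hnatcast]
    _ = esymm (n - 1) (j' + 1) κ ^ j' * ((n - 1).choose j' : ℝ) ^ (j' + 1) *
          ((n : ℝ) - ((j' + 1 : ℕ) : ℝ)) ^ (j' + 1) := by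
        rw [mul_pow]; ring
    _ ≤ esymm (n - 1) j' κ ^ (j' + 1) * ((n - 1).choose (j' + 1) : ℝ) ^ j' *
          ((n : ℝ) - ((j' + 1 : ℕ) : ℝ)) ^ (j' + 1) :=
        mul_le_mul_of_nonneg_right hMac2 (by positivity)
    _ = esymm (n - 1) j' κ ^ (j' + 1) * ((n : ℝ) - ((j' + 1 : ℕ) : ℝ)) ^ (j' + 1) *
          ((n - 1).choose (j' + 1) : ℝ) ^ j' := by ring
end

section
/- Let n ≥ 3 and 1 ≤ k ≤ n-1 be integers, and let κ ∈ ℝ^{n-1} lie in the topological closure of the Gårding cone Γ_k^+. Then σ_j(κ) ≥ 0 for all 1 ≤ j ≤ k, and for every j with 1 ≤ j ≤ k the inequality σ_{j-1}(κ) ≥ (j/(n-j)) · (binom(n-1, j))^{1/j} · σ_j(κ)^{(j-1)/j} holds (the right-hand side being interpreted via real powers of the nonnegative number σ_j(κ)). -/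
open Polynomial

def RealRooted (p : ℝ[X]) : Prop := Multiset.card p.roots = p.natDegree

lemma rr_of_natDegree_le_one {p : ℝ[X]} (h : p.natDegree ≤ 1) : RealRooted p := by
  rcases eq_or_ne p 0 with rfl | hp
  · simp [RealRooted]
  unfold RealRooted
  rcases Nat.lt_or_ge p.natDegree 1 with h0 | h0
  · have := p.card_roots'; omega
  have h : p.natDegree = 1 := le_antisymm h h0
  have h1 : p.coeff 1 ≠ 0 := by
    have := Polynomial.leadingCoeff_ne_zero.mpr hp
    rwa [Polynomial.leadingCoeff, h] at this
  have hroot : p.IsRoot (-(p.coeff 0) / p.coeff 1) := by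
    have hp1 := Polynomial.eq_X_add_C_of_natDegree_le_one h.le
    unfold Polynomial.IsRoot
    conv_lhs => rw [hp1]
    simp
    field_simp
    ring
  have hmem : (-(p.coeff 0) / p.coeff 1) ∈ p.roots := (Polynomial.mem_roots hp).mpr hroot
  have h2 : 1 ≤ Multiset.card p.roots := Multiset.card_pos_iff_exists_mem.mpr ⟨_, hmem⟩
  have := p.card_roots'
  omega

lemma rr_mul {p q : ℝ[X]} (hp : RealRooted p) (hq : RealRooted q) : RealRooted (p * q) := by
  rcases eq_or_ne p 0 with rfl | hp0
  · simp [RealRooted]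
  rcases eq_or_ne q 0 with rfl | hq0
  · simp [RealRooted]
  unfold RealRooted at *
  rw [Polynomial.roots_mul (mul_ne_zero hp0 hq0), Polynomial.natDegree_mul hp0 hq0,
    Multiset.card_add, hp, hq]

lemma rr_multiset_prod (s : Multiset ℝ[X]) (h : ∀ p ∈ s, RealRooted p) : RealRooted s.prod := by
  induction s using Multiset.induction with
  | empty => exact rr_of_natDegree_le_one (by simp)
  | cons a t ih =>
    rw [Multiset.prod_cons]
    exact rr_mul (h a (Multiset.mem_cons_self a t)) (ih fun p hp => h p (Multiset.mem_cons_of_mem hp))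

lemma rr_reverse {p : ℝ[X]} (h : RealRooted p) : RealRooted p.reverse := by
  rcases eq_or_ne p 0 with rfl | hp0
  · simp [RealRooted]
  have hdecomp := (Polynomial.C_leadingCoeff_mul_prod_multiset_X_sub_C (p := p) h).symm
  have : p.reverse = (C p.leadingCoeff).reverse *
      ((p.roots.map fun a => X - C a).map Polynomial.reverse).prod := by
    conv_lhs => rw [hdecomp]
    rw [Polynomial.reverse_mul_of_domain]
    congr 1
    induction p.roots using Multiset.induction with
    | empty =>
        simp only [Multiset.map_zero, Multiset.prod_zero]
        rw [← Polynomial.C_1, Polynomial.reverse_C]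
    | cons a t ih => simp only [Multiset.map_cons, Multiset.prod_cons,
        Polynomial.reverse_mul_of_domain, ih]
  rw [this, Polynomial.reverse_C]
  apply rr_mul (rr_of_natDegree_le_one (by simp))
  rw [Multiset.map_map]
  apply rr_multiset_prod
  intro q hq
  simp only [Multiset.mem_map, Function.comp_apply] at hq
  obtain ⟨a, -, rfl⟩ := hq
  exact rr_of_natDegree_le_one ((Polynomial.reverse_natDegree_le _).trans
    (le_of_eq (Polynomial.natDegree_X_sub_C a)))

lemma rr_derivative {p : ℝ[X]} (h : RealRooted p) : RealRooted (derivative p) := by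
  have h1 := Polynomial.card_roots_le_derivative p
  have h2 := (derivative p).card_roots'
  have h3 := p.natDegree_derivative_le
  rcases Nat.eq_zero_or_pos p.natDegree with h0 | h0
  · have : derivative p = 0 := by
      rw [Polynomial.eq_C_of_natDegree_eq_zero h0]; simp
    simp [this, RealRooted]
  · unfold RealRooted at *; omega

lemma rr_iterate_derivative {p : ℝ[X]} (h : RealRooted p) (k : ℕ) :
    RealRooted (derivative^[k] p) := by
  induction k with
  | zero => exact h
  | succ t ih => rw [Function.iterate_succ_apply']; exact rr_derivative ih

-- discriminant lemma
lemma disc_of_rr {q : ℝ[X]} (h : RealRooted q) (hd : q.natDegree ≤ 2) :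
    4 * (q.coeff 2 * q.coeff 0) ≤ q.coeff 1 ^ 2 := by
  rcases eq_or_ne (q.coeff 2) 0 with h2 | h2
  · rw [h2]; nlinarith [sq_nonneg (q.coeff 1)]
  have hq0 : q ≠ 0 := fun hq => h2 (by simp [hq])
  have hdeg : q.natDegree = 2 :=
    le_antisymm hd (Polynomial.le_natDegree_of_ne_zero h2)
  have hcard : Multiset.card q.roots = 2 := by rw [h, hdeg]
  have : ∃ r, r ∈ q.roots := Multiset.card_pos_iff_exists_mem.mp (by omega)
  obtain ⟨r, hr⟩ := this
  have hroot : q.IsRoot r := ((Polynomial.mem_roots hq0).mp hr)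
  have heval : q.coeff 0 + q.coeff 1 * r + q.coeff 2 * r ^ 2 = 0 := by
    have h3 : q.natDegree < 3 := by omega
    have := Polynomial.eval_eq_sum_range' h3 r
    rw [Polynomial.IsRoot] at hroot
    rw [hroot] at this
    simp [Finset.sum_range_succ] at this
    linarith [this]
  have key : q.coeff 1 ^ 2 - 4 * (q.coeff 2 * q.coeff 0) =
      (2 * q.coeff 2 * r + q.coeff 1) ^ 2 -
        4 * q.coeff 2 * (q.coeff 0 + q.coeff 1 * r + q.coeff 2 * r ^ 2) := by ring
  rw [heval] at key
  nlinarith [sq_nonneg (2 * q.coeff 2 * r + q.coeff 1), key]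



lemma fact_L1 (n : ℕ) : (n+1).descFactorial n = (n+1).factorial := by
  induction n with
  | zero => rfl
  | succ t ih => rw [Nat.succ_descFactorial_succ, ih, ← Nat.factorial_succ]

lemma fact_L2 (n : ℕ) : 2 * (n+2).descFactorial n = (n+2).factorial := by
  induction n with
  | zero => rfl
  | succ t ih =>
    rw [show t+1+2 = (t+2)+1 from rfl, Nat.succ_descFactorial_succ, Nat.factorial_succ, ← ih]
    ring

lemma newton_aux (a d m : ℕ) (hm : m = a+d+2) (κ : Fin m → ℝ) :
    ((a:ℝ)+2) * ((d:ℝ)+2) * (esymm m a κ * esymm m (a+2) κ) ≤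
      ((a:ℝ)+1) * ((d:ℝ)+1) * esymm m (a+1) κ ^ 2 := by
  set f : ℝ[X] := ∏ t : Fin m, (X + C (κ t)) with hf
  have hcoeff : ∀ j, j ≤ m → f.coeff (m - j) = esymm m j κ := by
    intro j hj
    have h1 : m - j ≤ (Finset.univ : Finset (Fin m)).card := by simp
    rw [hf, Finset.prod_X_add_C_coeff _ _ h1]
    simp only [Finset.card_univ, Fintype.card_fin]
    rw [Nat.sub_sub_self hj]
    rfl
  have hfeq : f = ((Finset.univ.val.map (fun t => -(κ t))).map (fun r => X - C r)).prod := by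
    rw [Multiset.map_map, hf, Finset.prod]
    congr 1
    apply Multiset.map_congr rfl
    intro t _
    simp [sub_neg_eq_add]
  have hrr : RealRooted f := by
    unfold RealRooted
    rw [hfeq, Polynomial.roots_multiset_prod_X_sub_C,
      Polynomial.natDegree_multiset_prod_X_sub_C_eq_card]
  have hdeg : f.natDegree = m := by
    rw [hfeq, Polynomial.natDegree_multiset_prod_X_sub_C_eq_card]
    simp
  have hlead : f.coeff m = 1 := by
    have hmo : f.Monic := Polynomial.monic_prod_of_monic _ _ fun t _ => Polynomial.monic_X_add_C _
    rw [← hdeg]; exact hmo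
  set g : ℝ[X] := derivative^[d] f with hg
  have hgc : ∀ s : ℕ, g.coeff s = ((s+d).descFactorial d : ℝ) * f.coeff (s+d) := by
    intro s; rw [hg, Polynomial.coeff_iterate_derivative, nsmul_eq_mul]
  have hglead : g.coeff (a+2) = (m.descFactorial d : ℝ) := by
    rw [hgc, show a+2+d = m by omega, hlead, mul_one]
  have hgne : g.coeff (a+2) ≠ 0 := by
    rw [hglead]
    have : m.descFactorial d ≠ 0 := by
      rw [Ne, Nat.descFactorial_eq_zero_iff_lt]; omega
    exact_mod_cast this
  have hgdeg : g.natDegree = a + 2 := by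
    refine le_antisymm ?_ (Polynomial.le_natDegree_of_ne_zero hgne)
    have h2 : g.natDegree ≤ f.natDegree - d := Polynomial.natDegree_iterate_derivative f d
    omega
  set h : ℝ[X] := g.reverse with hh
  have hhc : ∀ t, t ≤ a+2 → h.coeff t = g.coeff (a+2-t) := by
    intro t ht
    rw [hh, Polynomial.reverse, Polynomial.coeff_reflect, hgdeg, Polynomial.revAt_le ht]
  have hhdeg : h.natDegree ≤ a + 2 := by
    rw [hh]; exact (Polynomial.reverse_natDegree_le g).trans_eq hgdeg
  set q : ℝ[X] := derivative^[a] h with hq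
  have hqc : ∀ s : ℕ, q.coeff s = ((s+a).descFactorial a : ℝ) * h.coeff (s+a) := by
    intro s; rw [hq, Polynomial.coeff_iterate_derivative, nsmul_eq_mul]
  set C0 := a.factorial * (d+2).descFactorial d with hC0
  set C1 := (a+1).factorial * (d+1).factorial with hC1
  set C2 := (a+2).descFactorial a * d.factorial with hC2
  have hcf0 : f.coeff (2+d) = esymm m a κ := by
    have h5 := hcoeff a (by omega)
    rwa [show m - a = 2+d from by omega] at h5
  have hcf1 : f.coeff (1+d) = esymm m (a+1) κ := by
    have h5 := hcoeff (a+1) (by omega)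
    rwa [show m - (a+1) = 1+d from by omega] at h5
  have hcf2 : f.coeff (0+d) = esymm m (a+2) κ := by
    have h5 := hcoeff (a+2) (by omega)
    rwa [show m - (a+2) = 0+d from by omega] at h5
  have hq0 : q.coeff 0 = (C0 : ℝ) * esymm m a κ := by
    rw [hqc 0, show (0:ℕ)+a = a from by omega, hhc a (by omega), show a+2-a = 2 from by omega,
      hgc 2, hcf0, Nat.descFactorial_self, hC0,
      show (2:ℕ)+d = d+2 from by omega]
    push_cast
    ring
  have hq1 : q.coeff 1 = (C1 : ℝ) * esymm m (a+1) κ := by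
    rw [hqc 1, show (1:ℕ)+a = a+1 from by omega, hhc (a+1) (by omega),
      show a+2-(a+1) = 1 from by omega, hgc 1, hcf1,
      show (a+1).descFactorial a = (a+1).factorial from fact_L1 a,
      show ((1:ℕ)+d).descFactorial d = (d+1).factorial from by
        rw [show (1:ℕ)+d = d+1 from by omega]; exact fact_L1 d, hC1]
    push_cast
    ring
  have hq2 : q.coeff 2 = (C2 : ℝ) * esymm m (a+2) κ := by
    rw [hqc 2, show (2:ℕ)+a = a+2 from by omega, hhc (a+2) (by omega),
      show a+2-(a+2) = 0 from by omega, hgc 0, hcf2,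
      show ((0:ℕ)+d).descFactorial d = d.factorial from by
        rw [show (0:ℕ)+d = d from by omega]; exact Nat.descFactorial_self d, hC2]
    push_cast
    ring
  have hqrr : RealRooted q := rr_iterate_derivative (rr_reverse (rr_iterate_derivative hrr d)) a
  have hqdeg : q.natDegree ≤ 2 := by
    have h3 : q.natDegree ≤ h.natDegree - a := Polynomial.natDegree_iterate_derivative h a
    omega
  have hdisc := disc_of_rr hqrr hqdeg
  rw [hq0, hq1, hq2] at hdisc
  have key : (a+1)*(d+1) * (4 * C2 * C0) = ((a+2)*(d+2)) * C1^2 := by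
    have e1 : 4 * C2 * C0 = (a+2).factorial * d.factorial * a.factorial * (d+2).factorial := by
      rw [← fact_L2 a, ← fact_L2 d, hC0, hC2]; ring
    have fa2 : (a+2).factorial = (a+2)*((a+1)*a.factorial) := by
      rw [Nat.factorial_succ, Nat.factorial_succ]
    have fd2 : (d+2).factorial = (d+2)*((d+1)*d.factorial) := by
      rw [Nat.factorial_succ, Nat.factorial_succ]
    rw [e1, hC1, fa2, fd2, Nat.factorial_succ a, Nat.factorial_succ d]
    ring
  have keyR : ((a:ℝ)+1)*((d:ℝ)+1) * (4 * (C2:ℝ) * (C0:ℝ)) = (((a:ℝ)+2)*((d:ℝ)+2)) * (C1:ℝ)^2 := by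
    have h6 := congrArg (Nat.cast : ℕ → ℝ) key
    push_cast at h6
    linarith [h6]
  have hC1pos : (0:ℝ) < (C1:ℝ)^2 := by
    have h7 : 0 < C1 := Nat.mul_pos (Nat.factorial_pos _) (Nat.factorial_pos _)
    positivity
  have main : (((a:ℝ)+2)*((d:ℝ)+2)) * (esymm m a κ * esymm m (a+2) κ) * (C1:ℝ)^2 ≤
      (((a:ℝ)+1)*((d:ℝ)+1)) * esymm m (a+1) κ ^ 2 * (C1:ℝ)^2 := by
    have h1 := mul_le_mul_of_nonneg_left hdisc
      (show (0:ℝ) ≤ ((a:ℝ)+1)*((d:ℝ)+1) by positivity)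
    calc (((a:ℝ)+2)*((d:ℝ)+2)) * (esymm m a κ * esymm m (a+2) κ) * (C1:ℝ)^2
        = (((a:ℝ)+1)*((d:ℝ)+1)) * (4 * ((C2:ℝ) * esymm m (a+2) κ * ((C0:ℝ) * esymm m a κ))) := by
          linear_combination (esymm m a κ * esymm m (a+2) κ) * keyR.symm
      _ ≤ (((a:ℝ)+1)*((d:ℝ)+1)) * (((C1:ℝ) * esymm m (a+1) κ) ^ 2) := h1
      _ = (((a:ℝ)+1)*((d:ℝ)+1)) * esymm m (a+1) κ ^ 2 * (C1:ℝ)^2 := by ring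
  exact le_of_mul_le_mul_right main hC1pos

lemma newton (a d : ℕ) (κ : Fin (a+d+2) → ℝ) :
    ((a:ℝ)+2) * ((d:ℝ)+2) * (esymm (a+d+2) a κ * esymm (a+d+2) (a+2) κ) ≤
      ((a:ℝ)+1) * ((d:ℝ)+1) * esymm (a+d+2) (a+1) κ ^ 2 :=
  newton_aux a d _ rfl κ

lemma newton' (m i : ℕ) (κ : Fin m → ℝ) (h1 : 1 ≤ i) (h2 : i + 1 ≤ m) :
    ((i:ℝ)+1) * (((m-i:ℕ):ℝ)+1) * (esymm m (i-1) κ * esymm m (i+1) κ) ≤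
      (i:ℝ) * ((m-i:ℕ):ℝ) * esymm m i κ ^ 2 := by
  have hthis := newton_aux (i-1) (m-i-1) m (by omega) κ
  rw [show i-1+2 = i+1 from by omega, show i-1+1 = i from by omega] at hthis
  have e1 : ((i-1:ℕ):ℝ)+2 = (i:ℝ)+1 := by
    push_cast [Nat.cast_sub h1]; ring
  have e2 : ((m-i-1:ℕ):ℝ)+2 = ((m-i:ℕ):ℝ)+1 := by
    have h3 : (1:ℕ) ≤ m - i := by omega
    push_cast [Nat.cast_sub h3]; ring
  have e3 : ((i-1:ℕ):ℝ)+1 = (i:ℝ) := by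
    push_cast [Nat.cast_sub h1]; ring
  have e4 : ((m-i-1:ℕ):ℝ)+1 = ((m-i:ℕ):ℝ) := by
    have h3 : (1:ℕ) ≤ m - i := by omega
    push_cast [Nat.cast_sub h3]; ring
  rw [e1, e2, e3, e4] at hthis
  exact hthis

lemma mac_abs (k : ℕ) (p : ℕ → ℝ) (h0 : p 0 = 1) (hpos : ∀ t, t ≤ k → 0 < p t)
    (hnewton : ∀ i, 1 ≤ i → i + 1 ≤ k → p (i-1) * p (i+1) ≤ p i ^ 2) :
    ∀ j, 1 ≤ j → j ≤ k → p j ^ (j-1) ≤ p (j-1) ^ j := by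
  intro j hj1 hjk
  induction j, hj1 using Nat.le_induction with
  | base => simp [h0]
  | succ j hj ih =>
    have ihj := ih (by omega)
    have hn := hnewton j (by omega) (by omega)
    have pj := hpos j (by omega)
    have pj1 := hpos (j+1) (by omega)
    have pjm := hpos (j-1) (by omega)
    have step1 : p (j+1) * p (j-1) ≤ p j ^ 2 := by linarith [hn]
    have step2 : (p (j+1) * p (j-1)) ^ j ≤ (p j ^ 2) ^ j :=
      pow_le_pow_left₀ (by positivity) step1 j
    have step2' : p (j+1) ^ j * p (j-1) ^ j ≤ p j ^ (2*j) := by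
      rw [← mul_pow, pow_mul]
      exact step2
    have step3 : p (j+1) ^ j * p j ^ (j-1) ≤ p (j+1) ^ j * p (j-1) ^ j :=
      mul_le_mul_of_nonneg_left ihj (by positivity)
    have split : p j ^ (2*j) = p j ^ (j+1) * p j ^ (j-1) := by
      rw [← pow_add]
      congr 1
      omega
    have step4 : p (j+1) ^ j * p j ^ (j-1) ≤ p j ^ (j+1) * p j ^ (j-1) := by
      rw [← split]
      exact step3.trans step2'
    have hcancel : (0:ℝ) < p j ^ (j-1) := by positivity
    have := le_of_mul_le_mul_right step4 hcancel
    simpa using this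

lemma maclaurin_cone (m k : ℕ) (hkm : k ≤ m) (κ : Fin m → ℝ)
    (hκ : ∀ t, 1 ≤ t → t ≤ k → 0 < esymm m t κ) :
    ∀ j, 1 ≤ j → j ≤ k →
      (esymm m j κ / (m.choose j : ℝ)) ^ (j-1) ≤ (esymm m (j-1) κ / (m.choose (j-1) : ℝ)) ^ j := by
  have hmain := mac_abs k (fun t => esymm m t κ / (m.choose t : ℝ)) ?_ ?_ ?_
  · exact hmain
  · simp [esymm_zero]
  · intro t htk
    rcases Nat.eq_zero_or_pos t with rfl | ht1
    · simp [esymm_zero]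
    · have h1 := hκ t ht1 htk
      have h2 : (0:ℝ) < (m.choose t : ℝ) := by
        exact_mod_cast Nat.choose_pos (by omega)
      positivity
  · intro i hi1 hik
    have hN := newton' m i κ hi1 (by omega)
    set A := esymm m (i-1) κ with hA
    set B := esymm m i κ with hB
    set D := esymm m (i+1) κ with hD
    set mi : ℝ := ((m-i:ℕ):ℝ) with hmi
    have hc0 : (0:ℝ) < (m.choose (i-1) : ℝ) := by
      exact_mod_cast Nat.choose_pos (by omega)
    have hc1 : (0:ℝ) < (m.choose i : ℝ) := by
      exact_mod_cast Nat.choose_pos (by omega)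
    have hc2 : (0:ℝ) < (m.choose (i+1) : ℝ) := by
      exact_mod_cast Nat.choose_pos (by omega)
    set c0 : ℝ := (m.choose (i-1) : ℝ)
    set c1 : ℝ := (m.choose i : ℝ)
    set c2 : ℝ := (m.choose (i+1) : ℝ)
    have e1n : m.choose i * i = m.choose (i-1) * ((m-i)+1) := by
      have := Nat.choose_succ_right_eq m (i-1)
      rw [show i-1+1 = i from by omega] at this
      rw [this, show m - (i-1) = (m-i)+1 from by omega]
    have e2n : m.choose (i+1) * (i+1) = m.choose i * (m-i) := Nat.choose_succ_right_eq m i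
    have e1R : c1 * (i:ℝ) = c0 * (mi + 1) := by
      have := congrArg (Nat.cast : ℕ → ℝ) e1n
      push_cast at this
      rw [hmi]
      push_cast
      linarith [this]
    have e2R : c2 * ((i:ℝ)+1) = c1 * mi := by
      have := congrArg (Nat.cast : ℕ → ℝ) e2n
      push_cast at this
      rw [hmi]
      push_cast
      linarith [this]
    have hipos : (0:ℝ) < (i:ℝ) * ((i:ℝ)+1) := by positivity
    have step : ((((i:ℝ)+1)*(mi+1))*(A*D)) * (c0*c1) ≤ (((i:ℝ)*mi)*B^2) * (c0*c1) := by
      apply mul_le_mul_of_nonneg_right _ (by positivity)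
      calc ((i:ℝ)+1)*(mi+1)*(A*D) = ((i:ℝ)+1) * (mi+1) * (A * D) := by ring
        _ ≤ (i:ℝ) * mi * B^2 := hN
        _ = ((i:ℝ)*mi)*B^2 := by ring
    have eqL : A*D*c1^2*((i:ℝ)*((i:ℝ)+1)) = ((((i:ℝ)+1)*(mi+1))*(A*D))*(c0*c1) := by
      linear_combination (A*D*c1*((i:ℝ)+1))*e1R
    have eqR : B^2*(c0*c2)*((i:ℝ)*((i:ℝ)+1)) = (((i:ℝ)*mi)*B^2)*(c0*c1) := by
      linear_combination (B^2*c0*(i:ℝ))*e2R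
    have goal' : A*D*c1^2*((i:ℝ)*((i:ℝ)+1)) ≤ B^2*(c0*c2)*((i:ℝ)*((i:ℝ)+1)) := by
      rw [eqL, eqR]
      exact step
    have T : A*D*c1^2 ≤ B^2*(c0*c2) := le_of_mul_le_mul_right goal' hipos
    rw [div_mul_div_comm, div_pow, div_le_div_iff₀ (by positivity) (by positivity)]
    calc A * D * c1^2 ≤ B^2*(c0*c2) := T
      _ = B^2 * (c0 * c2) := by ring

lemma mac_rpow (m n k j : ℕ) (hm : m + 1 = n) (hkm : k ≤ m)
    (κ : Fin m → ℝ) (hpos : ∀ t, 1 ≤ t → t ≤ k → 0 < esymm m t κ)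
    (hj1 : 1 ≤ j) (hjk : j ≤ k) :
    ((j:ℝ)/((n:ℝ)-j)) * ((m.choose j : ℝ)) ^ ((1:ℝ)/j) * (esymm m j κ) ^ (((j:ℝ)-1)/j)
      ≤ esymm m (j-1) κ := by
  have hjm : j ≤ m := le_trans hjk hkm
  have hσj : 0 < esymm m j κ := hpos j hj1 hjk
  have hσ' : 0 < esymm m (j-1) κ := by
    rcases Nat.eq_or_lt_of_le hj1 with h | h
    · rw [show j - 1 = 0 from by omega, esymm_zero]; norm_num
    · exact hpos (j-1) (by omega) (by omega)
  have hcj : (0:ℝ) < (m.choose j : ℝ) := by exact_mod_cast Nat.choose_pos hjm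
  have hcj' : (0:ℝ) < (m.choose (j-1) : ℝ) := by exact_mod_cast Nat.choose_pos (by omega)
  have hjR : (0:ℝ) < (j:ℝ) := by exact_mod_cast hj1
  have hnj : (0:ℝ) < (n:ℝ) - j := by
    have : (j:ℝ) < (n:ℝ) := by exact_mod_cast (by omega : j < n)
    linarith
  set σ := esymm m j κ with hσdef
  set σ' := esymm m (j-1) κ with hσ'def
  set cj : ℝ := (m.choose j : ℝ) with hcjdef
  set cj' : ℝ := (m.choose (j-1) : ℝ) with hcj'def
  have hratio : (j:ℝ)/((n:ℝ)-j) = cj'/cj := by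
    have e1n : m.choose j * j = m.choose (j-1) * ((m-j)+1) := by
      have h5 := Nat.choose_succ_right_eq m (j-1)
      rw [show j-1+1 = j from by omega] at h5
      rw [h5, show m - (j-1) = (m-j)+1 from by omega]
    have e1R : cj * (j:ℝ) = cj' * ((n:ℝ) - j) := by
      have h6 := congrArg (Nat.cast : ℕ → ℝ) e1n
      push_cast [Nat.cast_sub hjm] at h6
      rw [hcjdef, hcj'def]
      push_cast
      have hnm : (n:ℝ) = (m:ℝ) + 1 := by exact_mod_cast hm.symm
      rw [hnm]
      linarith [h6]
    rw [div_eq_div_iff hnj.ne' hcj.ne']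
    linarith [e1R]
  have hmac := maclaurin_cone m k hkm κ hpos j hj1 hjk
  rw [div_pow, div_pow, div_le_div_iff₀ (by positivity) (by positivity)] at hmac
  -- hmac : σ ^ (j-1) * cj' ^ j ≤ σ' ^ j * cj ^ (j-1)
  have hjne : j ≠ 0 := by omega
  apply (pow_le_pow_iff_left₀ (by positivity) hσ'.le hjne).mp
  have hpow1 : ((cj ^ ((1:ℝ)/j)) ^ j) = cj := by
    rw [one_div, Real.rpow_inv_natCast_pow hcj.le hjne]
  have hpow2 : ((σ ^ (((j:ℝ)-1)/j)) ^ j) = σ ^ (j-1) := by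
    rw [← Real.rpow_natCast (σ ^ (((j:ℝ)-1)/j)) j, ← Real.rpow_mul hσj.le,
      show (((j:ℝ)-1)/j) * (j:ℝ) = ((j-1:ℕ):ℝ) from by
        push_cast [Nat.cast_sub hj1]
        field_simp,
      Real.rpow_natCast]
  have hcjpow : cj ^ j = cj ^ (j-1) * cj := by
    rw [← pow_succ, show j - 1 + 1 = j from by omega]
  calc ((j:ℝ)/((n:ℝ)-j) * cj ^ ((1:ℝ)/j) * σ ^ (((j:ℝ)-1)/j)) ^ j
      = ((j:ℝ)/((n:ℝ)-j))^j * ((cj ^ ((1:ℝ)/j)) ^ j) * ((σ ^ (((j:ℝ)-1)/j)) ^ j) := by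
        rw [mul_pow, mul_pow]
    _ = (cj'/cj)^j * cj * σ ^ (j-1) := by rw [hratio, hpow1, hpow2]
    _ = (σ ^ (j-1) * cj' ^ j) / cj ^ (j-1) := by
        rw [div_pow]
        field_simp
        rw [hcjpow]
        ring
    _ ≤ σ' ^ j := by
        rw [div_le_iff₀ (by positivity)]
        exact hmac

lemma esymm_continuous (m j : ℕ) : Continuous (fun κ : Fin m → ℝ => esymm m j κ) := by
  unfold esymm
  exact continuous_finset_sum _ fun s _ =>
    continuous_finset_prod _ fun i _ => continuous_apply i

/-- On the closure of the Gårding cone, `σ_j ≥ 0` and the Maclaurin-type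
inequality continues to hold. -/
theorem stmt_2 (n k : ℕ) (hn : 3 ≤ n) (hk1 : 1 ≤ k) (hk2 : k ≤ n - 1)
    (κ : Fin (n - 1) → ℝ) (hκ : κ ∈ closure (gardingCone (n - 1) k)) :
    (∀ j, 1 ≤ j → j ≤ k → 0 ≤ esymm (n - 1) j κ) ∧
    (∀ j, 1 ≤ j → j ≤ k →
      esymm (n - 1) (j - 1) κ ≥
        ((j : ℝ) / ((n : ℝ) - j)) * ((Nat.choose (n - 1) j : ℝ)) ^ ((1 : ℝ) / j) *
          (esymm (n - 1) j κ) ^ (((j : ℝ) - 1) / j)) := by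
  constructor
  · intro j hj1 hjk
    have hclosed : IsClosed {κ' : Fin (n-1) → ℝ | 0 ≤ esymm (n-1) j κ'} :=
      isClosed_le continuous_const (esymm_continuous (n-1) j)
    have hsub : gardingCone (n-1) k ⊆ {κ' : Fin (n-1) → ℝ | 0 ≤ esymm (n-1) j κ'} :=
      fun x hx => (hx j hj1 hjk).le
    exact closure_minimal hsub hclosed hκ
  · intro j hj1 hjk
    rw [ge_iff_le]
    have he : (0:ℝ) ≤ ((j:ℝ)-1)/j := by
      apply div_nonneg _ (by positivity)
      have : (1:ℝ) ≤ (j:ℝ) := by exact_mod_cast hj1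
      linarith
    have hcont : Continuous (fun κ' : Fin (n-1) → ℝ =>
        ((j:ℝ) / ((n:ℝ) - j)) * ((Nat.choose (n-1) j : ℝ)) ^ ((1:ℝ)/j) *
          (esymm (n-1) j κ') ^ (((j:ℝ)-1)/j)) :=
      continuous_const.mul ((Real.continuous_rpow_const he).comp (esymm_continuous (n-1) j))
    have hclosed : IsClosed {κ' : Fin (n-1) → ℝ |
        ((j:ℝ) / ((n:ℝ) - j)) * ((Nat.choose (n-1) j : ℝ)) ^ ((1:ℝ)/j) *
          (esymm (n-1) j κ') ^ (((j:ℝ)-1)/j) ≤ esymm (n-1) (j-1) κ'} :=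
      isClosed_le hcont (esymm_continuous (n-1) (j-1))
    refine closure_minimal ?_ hclosed hκ
    intro x hx
    exact mac_rpow (n-1) n k j (by omega) hk2 x (fun t ht1 htk => hx t ht1 htk) hj1 hjk
end

section
/- Let n ≥ 3 be an integer, let Σ be a topological space, let κ : Σ → ℝ^{n-1} be continuous, and let x₀ ∈ Σ be a point at which all n-1 components of κ(x₀) are positive. For each 1 ≤ k ≤ n-1, let G_k denote the connected component of the open set {x ∈ Σ : σ_k(κ(x)) > 0} containing x₀. Then for every 1 ≤ k ≤ n-1 one has G_k = G_1 ∩ G_2 ∩ … ∩ G_k; in particular G_{k+1} ⊆ G_k for each 1 ≤ k ≤ n-2. -/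
namespace Stmt5Aux

open Polynomial

lemma esymm_zero_eq_one (m : ℕ) (κ : Fin m → ℝ) : esymm m 0 κ = 1 := by
  simp [esymm]

lemma esymm_pos_of_pos {m j : ℕ} (hj : j ≤ m) (κ : Fin m → ℝ) (hκ : ∀ i, 0 < κ i) :
    0 < esymm m j κ := by
  apply Finset.sum_pos
  · intro s _
    exact Finset.prod_pos fun i _ => hκ i
  · exact Finset.powersetCard_nonempty.2 (by simpa using hj)

lemma multiset_sum_pos (s : Multiset ℝ) (h : ∀ x ∈ s, 0 < x) (hs : s ≠ 0) : 0 < s.sum := by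
  obtain ⟨a, ha⟩ := Multiset.exists_mem_of_ne_zero hs
  obtain ⟨t, rfl⟩ := Multiset.exists_cons_of_mem ha
  rw [Multiset.sum_cons]
  have ht : 0 ≤ t.sum := Multiset.sum_nonneg fun x hx =>
    (h x (Multiset.mem_cons_of_mem hx)).le
  have : 0 < a := h a (Multiset.mem_cons_self _ _)
  linarith

lemma multiset_prod_pos (s : Multiset ℝ) (h : ∀ x ∈ s, 0 < x) : 0 < s.prod := by
  induction s using Multiset.induction_on with
  | empty => simp
  | cons a t ih =>
    rw [Multiset.prod_cons]
    exact mul_pos (h a (Multiset.mem_cons_self _ _))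
      (ih fun x hx => h x (Multiset.mem_cons_of_mem hx))

lemma multiset_esymm_pos {s : Multiset ℝ} (h : ∀ x ∈ s, 0 < x) {j : ℕ}
    (hj : j ≤ Multiset.card s) : 0 < s.esymm j := by
  apply multiset_sum_pos
  · intro x hx
    rw [Multiset.mem_map] at hx
    obtain ⟨t, ht, rfl⟩ := hx
    rw [Multiset.mem_powersetCard] at ht
    exact multiset_prod_pos t fun y hy => h y (Multiset.mem_of_le ht.1 hy)
  · intro h0
    have := congrArg Multiset.card h0
    rw [Multiset.card_map, Multiset.card_powersetCard] at this
    simp only [Multiset.card_zero] at this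
    exact absurd this (Nat.choose_pos hj).ne'

/-- Iterated derivatives of a real polynomial with as many real roots as its degree
again have as many real roots as their degree. -/
lemma iter_deriv_real_rooted (p : ℝ[X]) (N : ℕ) (hN : p.natDegree = N)
    (hroots : Multiset.card p.roots = N) (hp : p ≠ 0) :
    ∀ t, t ≤ N → (derivative^[t] p).natDegree = N - t ∧
      Multiset.card (derivative^[t] p).roots = N - t ∧ derivative^[t] p ≠ 0 := by
  intro t
  induction t with
  | zero => intro _; simpa using ⟨hN, hroots, hp⟩
  | succ t ih =>
    intro ht
    obtain ⟨hdeg, hrt, hne⟩ := ih (Nat.le_of_succ_le ht)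
    set q := derivative^[t] p with hq
    have hd1 : 1 ≤ N - t := by omega
    -- the coefficient of the derivative in degree (N - t - 1) is nonzero
    have hlc : q.coeff (N - t) ≠ 0 := by
      rw [← hdeg]
      exact mt leadingCoeff_eq_zero.1 hne
    have hco : (derivative q).coeff (N - t - 1) = q.coeff (N - t) * ((N - t - 1 : ℕ) + 1) := by
      rw [coeff_derivative]
      have h : N - t - 1 + 1 = N - t := by omega
      rw [h]
    have hco' : (derivative q).coeff (N - t - 1) ≠ 0 := by
      rw [hco]
      apply mul_ne_zero hlc
      positivity
    have hne' : derivative q ≠ 0 := fun h => hco' (by simp [h])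
    have hdegle : (derivative q).natDegree ≤ N - t - 1 := by
      have := natDegree_derivative_le q
      omega
    have hdegge : N - t - 1 ≤ (derivative q).natDegree := le_natDegree_of_ne_zero hco'
    have hdeg' : (derivative q).natDegree = N - t - 1 := le_antisymm hdegle hdegge
    have hrtle : Multiset.card (derivative q).roots ≤ N - t - 1 := by
      rw [← hdeg']; exact card_roots' _
    have hrtge : N - t - 1 ≤ Multiset.card (derivative q).roots := by
      have := card_roots_le_derivative q
      omega
    rw [Function.iterate_succ_apply', ← hq]
    refine ⟨by omega, by omega, hne'⟩

/-- Key algebraic fact: if `σ_j(κ) ≥ 0` for `1 ≤ j ≤ k` and `σ_k(κ) > 0`, then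
`σ_j(κ) > 0` for all `1 ≤ j ≤ k`. -/
lemma garding_fact {m k : ℕ} (hk1 : 1 ≤ k) (hkm : k ≤ m) (κ : Fin m → ℝ)
    (hnn : ∀ j, 1 ≤ j → j ≤ k → 0 ≤ esymm m j κ) (hpos : 0 < esymm m k κ) :
    ∀ j, 1 ≤ j → j ≤ k → 0 < esymm m j κ := by
  classical
  set f : ℝ[X] := ∏ i : Fin m, (X + C (κ i)) with hf
  have hmono : f.Monic := monic_prod_of_monic _ _ fun i _ => monic_X_add_C _
  have hfne : f ≠ 0 := hmono.ne_zero
  have hfdeg : f.natDegree = m := by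
    rw [hf, natDegree_prod_of_monic _ _ fun i _ => monic_X_add_C _]
    simp [natDegree_X_add_C]
  -- coefficients of f are elementary symmetric polynomials
  have hcoeff : ∀ i, i ≤ m → f.coeff (m - i) = esymm m i κ := by
    intro i hi
    have hcard : (Finset.univ : Finset (Fin m)).card = m := by simp
    have h1 : m - i ≤ (Finset.univ : Finset (Fin m)).card := by omega
    rw [hf, Finset.prod_X_add_C_coeff _ _ h1, esymm]
    congr 1
    rw [hcard]
    congr 1
    omega
  -- f splits, so it has m real roots
  have hsplit : f.Splits := by
    rw [hf]
    exact Splits.prod fun i _ =>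
      Splits.of_natDegree_le_one (le_of_eq (natDegree_X_add_C _))
  have hfroots : Multiset.card f.roots = m := by
    rw [← hfdeg]
    exact (splits_iff_card_roots).1 hsplit
  -- iterated derivative
  obtain ⟨hgdeg, hgroots, hgne⟩ :=
    iter_deriv_real_rooted f m hfdeg hfroots hfne (m - k) (Nat.sub_le _ _)
  set g : ℝ[X] := derivative^[m - k] f with hg
  have hmk : m - (m - k) = k := by omega
  rw [hmk] at hgdeg hgroots
  -- coefficients of g
  have hgcoeff : ∀ j, g.coeff j =
      ((j + (m - k)).descFactorial (m - k) : ℝ) * f.coeff (j + (m - k)) := by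
    intro j
    rw [hg, coeff_iterate_derivative, nsmul_eq_mul]
  have hgcoeff' : ∀ j, j ≤ k →
      g.coeff j = ((j + (m - k)).descFactorial (m - k) : ℝ) * esymm m (k - j) κ := by
    intro j hj
    rw [hgcoeff j]
    congr 1
    have : j + (m - k) = m - (k - j) := by omega
    rw [this, hcoeff (k - j) (by omega)]
  have hdesc : ∀ j : ℕ, (0 : ℝ) < ((j + (m - k)).descFactorial (m - k) : ℝ) := by
    intro j
    have : 0 < (j + (m - k)).descFactorial (m - k) := by
      apply Nat.pos_of_ne_zero
      rw [Ne, Nat.descFactorial_eq_zero_iff_lt]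
      omega
    exact_mod_cast this
  -- all coefficients of g are nonnegative, the constant one is positive
  have hnn' : ∀ i, i ≤ k → 0 ≤ esymm m i κ := by
    intro i hi
    rcases Nat.eq_zero_or_pos i with h0 | h1
    · rw [h0, esymm_zero_eq_one]; norm_num
    · exact hnn i h1 hi
  have hgnn : ∀ j, 0 ≤ g.coeff j := by
    intro j
    by_cases hj : j ≤ k
    · rw [hgcoeff' j hj]
      exact mul_nonneg (hdesc j).le (hnn' _ (Nat.sub_le _ _))
    · rw [coeff_eq_zero_of_natDegree_lt (by omega)]
  have hg0 : 0 < g.coeff 0 := by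
    rw [hgcoeff' 0 (by omega)]
    exact mul_pos (hdesc 0) (by simpa using hpos)
  -- all roots of g are negative
  have hneg : ∀ r ∈ g.roots, r < 0 := by
    intro r hr
    by_contra hge
    push_neg at hge
    have heval : g.eval r = 0 := (isRoot_of_mem_roots hr).eq_zero
    have : 0 < g.eval r := by
      rw [eval_eq_sum_range]
      apply Finset.sum_pos'
      · intro i _
        exact mul_nonneg (hgnn i) (pow_nonneg hge i)
      · refine ⟨0, Finset.mem_range.2 (Nat.succ_pos _), ?_⟩
        simpa using hg0
    rw [heval] at this
    exact lt_irrefl _ this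
  -- leading coefficient of g is positive
  have hglc : 0 < g.leadingCoeff := by
    rw [leadingCoeff, hgdeg, hgcoeff' k le_rfl]
    rw [Nat.sub_self, esymm_zero_eq_one, mul_one]
    exact hdesc k
  -- coefficients of g in terms of its roots
  have hcoeffpos : ∀ j, j ≤ k → 0 < g.coeff j := by
    intro j hj
    have := Polynomial.coeff_eq_esymm_roots_of_card (p := g)
      (by rw [hgdeg]; exact hgroots) (k := j) (by rwa [hgdeg])
    rw [hgdeg] at this
    rw [this, mul_assoc]
    apply mul_pos hglc
    rw [← Multiset.esymm_neg]
    apply multiset_esymm_pos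
    · intro x hx
      rw [Multiset.mem_map] at hx
      obtain ⟨r, hr, rfl⟩ := hx
      simpa using hneg r hr
    · rw [Multiset.card_map, hgroots]
      exact Nat.sub_le _ _
  -- conclude
  intro j hj1 hjk
  have hkj : k - (k - j) = j := by omega
  have := hcoeffpos (k - j) (Nat.sub_le _ _)
  rw [hgcoeff' (k - j) (Nat.sub_le _ _), hkj] at this
  by_contra hle
  push_neg at hle
  have := mul_nonpos_of_nonneg_of_nonpos (hdesc (k - j)).le hle
  linarith

end Stmt5Aux

/-- The Claim inside Lemma 4: with `G_k` the connected component of `x₀` in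
`{x : σ_k(κ(x)) > 0}`, one has `G_k = G_1 ∩ ⋯ ∩ G_k`; in particular
`G_{k+1} ⊆ G_k`. -/
theorem stmt_5 (n : ℕ) (hn : 3 ≤ n)
    (X : Type*) [TopologicalSpace X]
    (κ : X → Fin (n - 1) → ℝ) (hκ : Continuous κ)
    (x₀ : X) (hx₀ : ∀ i, 0 < κ x₀ i)
    (G : ℕ → Set X)
    (hG : ∀ k, G k = connectedComponentIn {x | 0 < esymm (n - 1) k (κ x)} x₀) :
    (∀ k, 1 ≤ k → k ≤ n - 1 → G k = ⋂ j ∈ Finset.Icc 1 k, G j) ∧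
    (∀ k, 1 ≤ k → k ≤ n - 2 → G (k + 1) ⊆ G k) := by
  have hm2 : 2 ≤ n - 1 := by omega
  -- continuity of the symmetric functions
  have hcont : ∀ j, Continuous fun x => esymm (n - 1) j (κ x) := by
    intro j
    unfold esymm
    exact continuous_finset_sum _ fun s _ =>
      continuous_finset_prod _ fun i _ => (continuous_apply i).comp hκ
  set U : ℕ → Set X := fun j => {x | 0 < esymm (n - 1) j (κ x)} with hU
  have hUopen : ∀ j, IsOpen (U j) := fun j =>
    isOpen_lt continuous_const (hcont j)
  have hx₀U : ∀ j, j ≤ n - 1 → x₀ ∈ U j := fun j hj =>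
    Stmt5Aux.esymm_pos_of_pos hj (κ x₀) hx₀
  -- main claim : G k ⊆ U j for 1 ≤ j ≤ k ≤ n - 1
  have main : ∀ k, 1 ≤ k → k ≤ n - 1 → ∀ j, 1 ≤ j → j ≤ k → G k ⊆ U j := by
    intro k hk1 hkm
    have hGk : G k = connectedComponentIn (U k) x₀ := hG k
    have hGkconn : IsPreconnected (G k) := by
      rw [hGk]; exact isPreconnected_connectedComponentIn
    have hGksub : G k ⊆ U k := by
      rw [hGk]; exact connectedComponentIn_subset _ _
    have hx₀Gk : x₀ ∈ G k := by
      rw [hGk]; exact mem_connectedComponentIn (hx₀U k hkm)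
    set u : Set X := ⋂ j ∈ Finset.Icc 1 k, U j with hu
    set v : Set X := (⋂ j ∈ Finset.Icc 1 k, {x | 0 ≤ esymm (n - 1) j (κ x)})ᶜ with hv
    have huopen : IsOpen u := isOpen_biInter_finset fun j _ => hUopen j
    have hvopen : IsOpen v :=
      (isClosed_biInter fun j _ => isClosed_le continuous_const (hcont j)).isOpen_compl
    have hdisj : Disjoint u v := by
      rw [Set.disjoint_left]
      intro x hxu hxv
      apply hxv
      rw [Set.mem_iInter₂] at hxu ⊢
      intro j hj
      have h1 : 0 < esymm (n - 1) j (κ x) := hxu j hj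
      exact h1.le
    have hsub : G k ⊆ u ∪ v := by
      intro x hx
      by_cases hxF : x ∈ ⋂ j ∈ Finset.Icc 1 k, {x | 0 ≤ esymm (n - 1) j (κ x)}
      · left
        rw [Set.mem_iInter₂] at hxF
        have hpos := Stmt5Aux.garding_fact hk1 hkm (κ x)
          (fun j hj1 hjk => hxF j (Finset.mem_Icc.2 ⟨hj1, hjk⟩)) (hGksub hx)
        rw [hu, Set.mem_iInter₂]
        intro j hj
        rw [Finset.mem_Icc] at hj
        exact hpos j hj.1 hj.2
      · right; exact hxF
    have hx₀u : x₀ ∈ u := by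
      rw [hu, Set.mem_iInter₂]
      intro j hj
      rw [Finset.mem_Icc] at hj
      exact hx₀U j (le_trans hj.2 hkm)
    have hGku : G k ⊆ u :=
      IsPreconnected.subset_left_of_subset_union huopen hvopen hdisj hsub
        ⟨x₀, hx₀Gk, hx₀u⟩ hGkconn
    intro j hj1 hjk
    exact fun x hx => Set.mem_iInter₂.1 (hGku hx) j (Finset.mem_Icc.2 ⟨hj1, hjk⟩)
  -- G k ⊆ G j
  have hGsub : ∀ k, 1 ≤ k → k ≤ n - 1 → ∀ j, 1 ≤ j → j ≤ k → G k ⊆ G j := by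
    intro k hk1 hkm j hj1 hjk
    have hGkconn : IsPreconnected (G k) := by
      rw [hG k]; exact isPreconnected_connectedComponentIn
    have hx₀Gk : x₀ ∈ G k := by
      rw [hG k]; exact mem_connectedComponentIn (hx₀U k hkm)
    rw [hG j]
    exact hGkconn.subset_connectedComponentIn hx₀Gk (main k hk1 hkm j hj1 hjk)
  have part1 : ∀ k, 1 ≤ k → k ≤ n - 1 → G k = ⋂ j ∈ Finset.Icc 1 k, G j := by
    intro k hk1 hkm
    apply Set.Subset.antisymm
    · apply Set.subset_iInter₂
      intro j hj
      rw [Finset.mem_Icc] at hj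
      exact hGsub k hk1 hkm j hj.1 hj.2
    · exact Set.biInter_subset_of_mem (Finset.mem_Icc.2 ⟨hk1, le_rfl⟩)
  refine ⟨part1, ?_⟩
  intro k hk1 hkm
  exact le_trans (le_of_eq (part1 (k + 1) (by omega) (by omega)))
    (Set.biInter_subset_of_mem (Finset.mem_Icc.2 ⟨hk1, by omega⟩))
end

section
/- Let m ≥ 1 and 1 ≤ k ≤ m be integers. The Gårding cone Γ_k^+ = {κ ∈ ℝ^m : σ_j(κ) > 0 for j = 1,…,k} equals the connected component of the open set {κ ∈ ℝ^m : σ_k(κ) > 0} that contains the point (1,1,…,1) (equivalently, the component containing the open positive cone {κ : κ_i > 0 for all i}). -/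
namespace GardingAux

open Polynomial

variable {m : ℕ}

lemma esymm_zero (m : ℕ) (κ : Fin m → ℝ) : esymm m 0 κ = 1 := by
  simp [esymm]

lemma esymm_continuous (m j : ℕ) : Continuous fun κ : Fin m → ℝ => esymm m j κ :=
  continuous_finset_sum _ fun s _ => continuous_finset_prod _ fun i _ => continuous_apply i

lemma esymm_smul (m j : ℕ) (c : ℝ) (κ : Fin m → ℝ) :
    esymm m j (fun i => c * κ i) = c ^ j * esymm m j κ := by
  unfold esymm
  rw [Finset.mul_sum]
  refine Finset.sum_congr rfl fun s hs => ?_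
  rw [Finset.mem_powersetCard] at hs
  rw [Finset.prod_mul_distrib, Finset.prod_const, hs.2]

/-- The polynomial `∏ i, (X + κ i)`. -/
noncomputable def P (m : ℕ) (κ : Fin m → ℝ) : ℝ[X] := ∏ i, (X + C (κ i))

lemma P_monic (κ : Fin m → ℝ) : (P m κ).Monic :=
  monic_prod_of_monic _ _ fun i _ => monic_X_add_C _

lemma P_natDegree (κ : Fin m → ℝ) : (P m κ).natDegree = m := by
  rw [P, natDegree_prod _ _ fun i _ => (monic_X_add_C (κ i)).ne_zero]
  simp [natDegree_X_add_C]

lemma P_roots_card (κ : Fin m → ℝ) : Multiset.card (P m κ).roots = m := by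
  rw [P, roots_prod _ _ (P_monic κ).ne_zero]
  rw [Multiset.card_bind]
  have : ∀ i : Fin m, Multiset.card (X + C (κ i)).roots = 1 := by
    intro i
    have h : (X + C (κ i)) = X - C (-(κ i)) := by rw [map_neg, sub_neg_eq_add]
    rw [h, roots_X_sub_C]
    simp
  simp [this]

lemma P_coeff (κ : Fin m → ℝ) {n : ℕ} (hn : n ≤ m) :
    (P m κ).coeff n = esymm m (m - n) κ := by
  rw [P, Finset.prod_X_add_C_coeff _ _ (by simpa using hn)]
  simp [esymm, Finset.card_univ]

/-- `Q m j κ` is the `(m-j)`-th Hasse derivative of `P m κ`; it has degree `j` and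
`(Q m j κ).eval t = σ_j(κ + t·1)`. -/
noncomputable def Q (m j : ℕ) (κ : Fin m → ℝ) : ℝ[X] := hasseDeriv (m - j) (P m κ)

lemma Q_coeff (κ : Fin m → ℝ) {j n : ℕ} (hj : j ≤ m) (hn : n ≤ j) :
    (Q m j κ).coeff n = ((n + (m - j)).choose (m - j) : ℝ) * esymm m (j - n) κ := by
  rw [Q, hasseDeriv_coeff]
  congr 1
  have h1 : n + (m - j) ≤ m := by omega
  rw [P_coeff κ h1]
  congr 1
  omega

lemma Q_natDegree (κ : Fin m → ℝ) {j : ℕ} (hj : j ≤ m) : (Q m j κ).natDegree = j := by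
  rw [Q, natDegree_hasseDeriv, P_natDegree]
  omega

lemma Q_coeff_top_pos (κ : Fin m → ℝ) {j : ℕ} (hj : j ≤ m) : 0 < (Q m j κ).coeff j := by
  rw [Q_coeff κ hj le_rfl, Nat.sub_self, esymm_zero, mul_one]
  exact_mod_cast Nat.choose_pos (Nat.le_add_left _ _)

lemma Q_ne_zero (κ : Fin m → ℝ) {j : ℕ} (hj : j ≤ m) : Q m j κ ≠ 0 := by
  intro h
  have := Q_coeff_top_pos κ hj
  rw [h] at this
  simp at this

lemma Q_leadingCoeff_pos (κ : Fin m → ℝ) {j : ℕ} (hj : j ≤ m) :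
    0 < (Q m j κ).leadingCoeff := by
  rw [leadingCoeff, Q_natDegree κ hj]
  exact Q_coeff_top_pos κ hj

lemma Q_eval (κ : Fin m → ℝ) {j : ℕ} (hj : j ≤ m) (t : ℝ) :
    (Q m j κ).eval t = esymm m j (fun i => κ i + t) := by
  have h1 : taylor t (P m κ) = P m (fun i => κ i + t) := by
    rw [taylor_apply, P, prod_comp]
    refine Finset.prod_congr rfl fun i _ => ?_
    rw [add_comp, X_comp, C_comp, C_add]
    ring
  have h2 := taylor_coeff (r := t) (f := P m κ) (m - j)
  rw [Q, ← h2, h1, P_coeff _ (Nat.sub_le m j)]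
  congr 1
  omega

lemma Q_eval_pos (κ : Fin m → ℝ) {j : ℕ} (hj : j ≤ m)
    (hnn : ∀ i, 1 ≤ i → i ≤ j → 0 ≤ esymm m i κ) {t : ℝ} (ht : 0 ≤ t)
    (h : 0 < t ∨ 0 < esymm m j κ) : 0 < (Q m j κ).eval t := by
  rw [eval_eq_sum_range, Q_natDegree κ hj]
  have hterm : ∀ n ∈ Finset.range (j + 1), 0 ≤ (Q m j κ).coeff n * t ^ n := by
    intro n hn
    rw [Finset.mem_range] at hn
    have hn' : n ≤ j := by omega
    rw [Q_coeff κ hj hn']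
    have h1 : (0:ℝ) ≤ ((n + (m - j)).choose (m - j) : ℝ) := Nat.cast_nonneg _
    have h2 : 0 ≤ esymm m (j - n) κ := by
      rcases Nat.eq_zero_or_pos (j - n) with h0 | h0
      · rw [h0, esymm_zero]; norm_num
      · exact hnn _ h0 (by omega)
    exact mul_nonneg (mul_nonneg h1 h2) (pow_nonneg ht n)
  rcases h with ht0 | hσ
  · refine Finset.sum_pos' hterm ⟨j, Finset.self_mem_range_succ j, ?_⟩
    rw [Q_coeff κ hj le_rfl, Nat.sub_self, esymm_zero, mul_one]
    refine mul_pos ?_ (pow_pos ht0 j)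
    exact_mod_cast Nat.choose_pos (Nat.le_add_left _ _)
  · refine Finset.sum_pos' hterm ⟨0, by simp, ?_⟩
    rw [Q_coeff κ hj (Nat.zero_le j), Nat.sub_zero, pow_zero, mul_one]
    refine mul_pos ?_ hσ
    have : 0 < (0 + (m - j)).choose (m - j) := Nat.choose_pos (by omega)
    exact_mod_cast this

lemma real_rooted_derivative {p : ℝ[X]} (h : p.natDegree ≤ Multiset.card p.roots) :
    (derivative p).natDegree ≤ Multiset.card (derivative p).roots := by
  have h1 := p.card_roots_le_derivative
  have h2 := natDegree_derivative_le p
  have h3 := p.card_roots'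
  omega

lemma real_rooted_iterate (n : ℕ) (p : ℝ[X]) (h : p.natDegree ≤ Multiset.card p.roots) :
    (derivative^[n] p).natDegree ≤ Multiset.card (derivative^[n] p).roots := by
  induction n with
  | zero => simpa
  | succ n ih =>
    rw [Function.iterate_succ_apply']
    exact real_rooted_derivative ih

lemma factorial_smul_hasseDeriv' (n : ℕ) (f : ℝ[X]) :
    ((n).factorial : ℝ) • hasseDeriv n f = derivative^[n] f := by
  have := congrFun (factorial_smul_hasseDeriv (R := ℝ) (k := n)) f
  simpa [LinearMap.smul_apply, Nat.cast_smul_eq_nsmul] using this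

lemma Q_real_rooted (κ : Fin m → ℝ) {j : ℕ} (hj : j ≤ m) :
    (Q m j κ).natDegree ≤ Multiset.card (Q m j κ).roots := by
  have hP : (P m κ).natDegree ≤ Multiset.card (P m κ).roots := by
    rw [P_natDegree, P_roots_card]
  have h := real_rooted_iterate (m - j) (P m κ) hP
  have hfac : ((m - j).factorial : ℝ) ≠ 0 := Nat.cast_ne_zero.mpr (Nat.factorial_ne_zero _)
  have hs : derivative^[m - j] (P m κ) = C (((m - j).factorial : ℝ)) * Q m j κ := by
    rw [← factorial_smul_hasseDeriv' (m - j) (P m κ), smul_eq_C_mul]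
    rfl
  rw [hs, roots_C_mul _ hfac, natDegree_C_mul hfac] at h
  exact h

lemma derivative_hasseDeriv (n : ℕ) (f : ℝ[X]) :
    derivative (hasseDeriv n f) = ((n + 1 : ℕ) : ℝ) • hasseDeriv (n + 1) f := by
  have hne : ((n).factorial : ℝ) ≠ 0 := Nat.cast_ne_zero.mpr (Nat.factorial_ne_zero _)
  have h3 : derivative (((n).factorial : ℝ) • hasseDeriv n f) = derivative^[n + 1] f := by
    rw [factorial_smul_hasseDeriv', Function.iterate_succ_apply']
  rw [derivative_smul, ← factorial_smul_hasseDeriv' (n + 1) f] at h3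
  apply smul_right_injective ℝ[X] hne
  show ((n).factorial : ℝ) • derivative (hasseDeriv n f) =
    ((n).factorial : ℝ) • (((n + 1 : ℕ) : ℝ) • hasseDeriv (n + 1) f)
  rw [h3, smul_smul]
  congr 1
  rw [Nat.factorial_succ]
  push_cast
  ring

lemma derivative_Q (κ : Fin m → ℝ) {j : ℕ} (hj1 : 1 ≤ j) (hjm : j ≤ m) :
    derivative (Q m j κ) = ((m - j + 1 : ℕ) : ℝ) • Q m (j - 1) κ := by
  have e : m - (j - 1) = (m - j) + 1 := by omega
  rw [Q, Q, e, derivative_hasseDeriv]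

/-- If `q` is real-rooted with all roots negative and positive leading coefficient, then
`q` and `q'` are positive on `[0, ∞)` (the latter if `deg q ≥ 1`). -/
lemma eval_pos_of_roots_neg :
    ∀ (n : ℕ) (q : ℝ[X]), q.natDegree = n → q.natDegree ≤ Multiset.card q.roots →
      0 < q.leadingCoeff → (∀ r ∈ q.roots, r < 0) →
      ∀ t : ℝ, 0 ≤ t →
        0 < q.eval t ∧ 0 ≤ (derivative q).eval t ∧
          (1 ≤ q.natDegree → 0 < (derivative q).eval t) := by
  intro n
  induction n with
  | zero =>
    intro q hdeg _ hlead _ t _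
    have hq : q = C (q.coeff 0) := eq_C_of_natDegree_eq_zero hdeg
    rw [leadingCoeff, hdeg] at hlead
    refine ⟨?_, ?_, ?_⟩
    · rw [hq, eval_C]; exact hlead
    · rw [hq, derivative_C, eval_zero]
    · intro h; omega
  | succ n ih =>
    intro q hdeg hcard hlead hneg t ht
    have hq0 : q ≠ 0 := by
      intro h
      rw [h, leadingCoeff_zero] at hlead
      exact lt_irrefl 0 hlead
    have hcard' : 0 < Multiset.card q.roots := by omega
    obtain ⟨r, hr⟩ := Multiset.card_pos_iff_exists_mem.mp hcard'
    have hdvd : (X - C r) ∣ q := dvd_iff_isRoot.mpr (isRoot_of_mem_roots hr)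
    obtain ⟨h, rfl⟩ := hdvd
    have hrneg : r < 0 := hneg r hr
    have hXr : (X - C r : ℝ[X]) ≠ 0 := (monic_X_sub_C r).ne_zero
    have hh0 : h ≠ 0 := fun h0 => hq0 (by rw [h0, mul_zero])
    have hmulne : (X - C r) * h ≠ 0 := hq0
    have hdegmul := natDegree_mul hXr hh0
    rw [natDegree_X_sub_C] at hdegmul
    have hdegh : h.natDegree = n := by omega
    have hleadh : 0 < h.leadingCoeff := by
      rwa [leadingCoeff_mul, (monic_X_sub_C r).leadingCoeff, one_mul] at hlead
    have hrootsq : ((X - C r) * h).roots = {r} + h.roots := by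
      rw [roots_mul hmulne, roots_X_sub_C]
    have hcardh : h.natDegree ≤ Multiset.card h.roots := by
      rw [hrootsq, Multiset.card_add] at hcard
      simp only [Multiset.card_singleton] at hcard
      omega
    have hnegh : ∀ s ∈ h.roots, s < 0 := by
      intro s hs
      exact hneg s (by rw [hrootsq]; exact Multiset.mem_add.mpr (Or.inr hs))
    obtain ⟨ih1, ih2, _⟩ := ih h hdegh hcardh hleadh hnegh t ht
    have htr : 0 < t - r := by linarith
    have heval : 0 < ((X - C r) * h).eval t := by
      rw [eval_mul, eval_sub, eval_X, eval_C]
      exact mul_pos htr ih1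
    have hder : 0 < (derivative ((X - C r) * h)).eval t := by
      rw [derivative_mul, derivative_X_sub_C, one_mul, eval_add, eval_mul, eval_sub,
        eval_X, eval_C]
      have : 0 ≤ (t - r) * (derivative h).eval t := mul_nonneg htr.le ih2
      linarith
    exact ⟨heval, hder.le, fun _ => hder⟩

/-- The key analytic lemma: if `σ_j(κ) ≥ 0` for all `1 ≤ j ≤ k` and `σ_k(κ) > 0`, then in fact
`σ_j(κ) > 0` for all `1 ≤ j ≤ k`. -/
lemma key (m k : ℕ) (hk2 : k ≤ m) (κ : Fin m → ℝ)
    (hnn : ∀ j, 1 ≤ j → j ≤ k → 0 ≤ esymm m j κ) (hk : 0 < esymm m k κ) :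
    ∀ j, 1 ≤ j → j ≤ k → 0 < esymm m j κ := by
  have heval0 : ∀ j, j ≤ m → (Q m j κ).eval 0 = esymm m j κ := by
    intro j hj
    rw [Q_eval κ hj]
    simp
  have hposQ : ∀ j, j ≤ k → ∀ t : ℝ, 0 < t → 0 < (Q m j κ).eval t := by
    intro j hj t ht
    exact Q_eval_pos κ (hj.trans hk2) (fun i h1 h2 => hnn i h1 (h2.trans hj)) ht.le (Or.inl ht)
  have hstep : ∀ j, 1 ≤ j → j ≤ k → 0 < esymm m j κ → 0 < esymm m (j - 1) κ := by
    intro j h1 hj hpos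
    have hjm : j ≤ m := hj.trans hk2
    have hneg : ∀ r ∈ (Q m j κ).roots, r < 0 := by
      intro r hr
      have hroot : (Q m j κ).eval r = 0 := isRoot_of_mem_roots hr
      rcases lt_trichotomy r 0 with h | h | h
      · exact h
      · exfalso; rw [h, heval0 j hjm] at hroot; linarith
      · exfalso; have := hposQ j hj r h; linarith
    obtain ⟨_, _, h3⟩ := eval_pos_of_roots_neg (Q m j κ).natDegree (Q m j κ) rfl
      (Q_real_rooted κ hjm) (Q_leadingCoeff_pos κ hjm) hneg 0 le_rfl
    have hd := h3 (by rw [Q_natDegree κ hjm]; exact h1)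
    rw [derivative_Q κ h1 hjm, eval_smul, smul_eq_mul, heval0 (j - 1) (by omega)] at hd
    have hc : (0:ℝ) < ((m - j + 1 : ℕ) : ℝ) := by
      exact_mod_cast Nat.succ_pos (m - j)
    nlinarith
  have main : ∀ d, d < k → 0 < esymm m (k - d) κ := by
    intro d
    induction d with
    | zero => intro _; simpa using hk
    | succ d ihd =>
      intro hdk
      have h1 := ihd (by omega)
      have h2 := hstep (k - d) (by omega) (by omega) h1
      have e : k - d - 1 = k - (d + 1) := by omega
      rwa [e] at h2
  intro j h1 hj
  have := main (k - j) (by omega)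
  have e : k - (k - j) = j := by omega
  rwa [e] at this

lemma gardingCone_isOpen (m k : ℕ) : IsOpen (gardingCone m k) := by
  have h : gardingCone m k = ⋂ j ∈ Finset.Icc 1 k, {κ : Fin m → ℝ | 0 < esymm m j κ} := by
    ext κ
    simp only [gardingCone, Set.mem_setOf_eq, Set.mem_iInter, Finset.mem_Icc]
    constructor
    · intro hκ j hj; exact hκ j hj.1 hj.2
    · intro hκ j h1 h2; exact hκ j ⟨h1, h2⟩
  rw [h]
  exact isOpen_biInter_finset fun j _ => isOpen_lt continuous_const (esymm_continuous m j)

lemma closed_nonneg (m k : ℕ) :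
    IsClosed {κ : Fin m → ℝ | ∀ j, 1 ≤ j → j ≤ k → 0 ≤ esymm m j κ} := by
  have h : {κ : Fin m → ℝ | ∀ j, 1 ≤ j → j ≤ k → 0 ≤ esymm m j κ} =
      ⋂ j, ⋂ (_ : 1 ≤ j), ⋂ (_ : j ≤ k), {κ : Fin m → ℝ | 0 ≤ esymm m j κ} := by
    ext κ
    simp
  rw [h]
  exact isClosed_iInter fun j => isClosed_iInter fun _ => isClosed_iInter fun _ =>
    isClosed_le continuous_const (esymm_continuous m j)

lemma one_mem (m k : ℕ) (hk2 : k ≤ m) : (fun _ => (1:ℝ)) ∈ gardingCone m k := by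
  intro j h1 hj
  have h : esymm m j (fun _ => (1:ℝ)) = (m.choose j : ℝ) := by
    unfold esymm
    simp [Finset.card_powersetCard, Finset.card_univ]
  rw [h]
  exact_mod_cast Nat.choose_pos (hj.trans hk2)

lemma segment_subset (m k : ℕ) (hk2 : k ≤ m) {κ : Fin m → ℝ} (hκ : κ ∈ gardingCone m k) :
    segment ℝ κ (fun _ => (1:ℝ)) ⊆ gardingCone m k := by
  rintro x ⟨a, b, ha, hb, hab, rfl⟩
  intro j h1 hj
  have hjm : j ≤ m := hj.trans hk2
  rcases eq_or_lt_of_le ha with ha0 | ha0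
  · have hb1 : b = 1 := by linarith
    have hx : (a • κ + b • fun _ => (1:ℝ)) = (fun _ : Fin m => (1:ℝ)) := by
      funext i
      simp [← ha0, hb1]
    rw [hx]
    exact one_mem m k hk2 j h1 hj
  · have hx : (a • κ + b • fun _ => (1:ℝ)) = fun i => a * ((fun i' => κ i' + b / a) i) := by
      funext i
      simp only [Pi.add_apply, Pi.smul_apply, smul_eq_mul]
      field_simp
    rw [hx, esymm_smul]
    have hpos : 0 < esymm m j (fun i => κ i + b / a) := by
      have h := Q_eval_pos (m := m) κ hjm (fun i hi1 hi2 => (hκ i hi1 (hi2.trans hj)).le)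
        (t := b / a) (div_nonneg hb ha0.le) (Or.inr (hκ j h1 hj))
      rwa [Q_eval κ hjm] at h
    exact mul_pos (pow_pos ha0 j) hpos

end GardingAux

/-- The Gårding cone equals the connected component of `{σ_k > 0}` containing
the point `(1, 1, …, 1)`. -/
theorem stmt_7 (m k : ℕ) (hm : 1 ≤ m) (hk1 : 1 ≤ k) (hk2 : k ≤ m) :
    gardingCone m k =
      connectedComponentIn {κ : Fin m → ℝ | 0 < esymm m k κ} (fun _ => 1) := by
  set U : Set (Fin m → ℝ) := {κ | 0 < esymm m k κ} with hU
  have hΓU : gardingCone m k ⊆ U := fun κ hκ => hκ k hk1 le_rfl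
  have h1Γ : (fun _ : Fin m => (1:ℝ)) ∈ gardingCone m k := GardingAux.one_mem m k hk2
  apply Set.Subset.antisymm
  · intro κ hκ
    have hseg : segment ℝ κ (fun _ => (1:ℝ)) ⊆ gardingCone m k :=
      GardingAux.segment_subset m k hk2 hκ
    have hpc : IsPreconnected (segment ℝ κ (fun _ => (1:ℝ))) :=
      (convex_segment _ _).isPreconnected
    have h := hpc.subset_connectedComponentIn (right_mem_segment ℝ _ _) (hseg.trans hΓU)
    exact h (left_mem_segment ℝ _ _)
  · set C := connectedComponentIn U (fun _ : Fin m => (1:ℝ)) with hC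
    have hCU : C ⊆ U := connectedComponentIn_subset _ _
    have hCpre : IsPreconnected C := isPreconnected_connectedComponentIn
    have hsub : C ⊆ gardingCone m k ∪ (closure (gardingCone m k))ᶜ := by
      intro κ hκC
      by_cases hcl : κ ∈ closure (gardingCone m k)
      · left
        have hnn : ∀ j, 1 ≤ j → j ≤ k → 0 ≤ esymm m j κ := by
          have hsubset : closure (gardingCone m k) ⊆
              {κ : Fin m → ℝ | ∀ j, 1 ≤ j → j ≤ k → 0 ≤ esymm m j κ} :=
            closure_minimal (fun x hx j h1 hj => (hx j h1 hj).le) (GardingAux.closed_nonneg m k)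
          exact hsubset hcl
        exact fun j h1 hj => GardingAux.key m k hk2 κ hnn (hCU hκC) j h1 hj
      · right; exact hcl
    have hdisj : Disjoint (gardingCone m k) (closure (gardingCone m k))ᶜ :=
      Set.disjoint_left.mpr fun x hx hxc => hxc (subset_closure hx)
    have hmem : (C ∩ gardingCone m k).Nonempty :=
      ⟨fun _ => 1, mem_connectedComponentIn (hΓU h1Γ), h1Γ⟩
    exact hCpre.subset_left_of_subset_union (GardingAux.gardingCone_isOpen m k)
      isClosed_closure.isOpen_compl hdisj hsub hmem
end

section
/- Let n ≥ 3 and 2 ≤ p ≤ n-1 be integers, let Σ be a connected topological space, and let κ : Σ → ℝ^{n-1} be a continuous map. Suppose that σ_p(κ(x)) > 0 for every x ∈ Σ, and that there exists a point x₀ ∈ Σ at which all n-1 components of κ(x₀) are positive. Then for every x ∈ Σ and every index i with 1 ≤ i ≤ n-1, one has σ_{p-2;i}(κ(x)) > 0. -/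
namespace NAux
open Finset

variable {ι : Type*} [DecidableEq ι]

/-- elementary symmetric function of the values of `κ` on the finset `s`. -/
noncomputable def E (s : Finset ι) (j : ℕ) (κ : ι → ℝ) : ℝ :=
  ∑ t ∈ s.powersetCard j, ∏ i ∈ t, κ i

@[simp] lemma E_zero (s : Finset ι) (κ : ι → ℝ) : E s 0 κ = 1 := by
  simp [E]

lemma E_of_lt {s : Finset ι} {j : ℕ} (h : s.card < j) (κ : ι → ℝ) : E s j κ = 0 := by
  rw [E, Finset.powersetCard_eq_empty.2 h, Finset.sum_empty]

lemma E_insert {a : ι} {s : Finset ι} (ha : a ∉ s) (j : ℕ) (κ : ι → ℝ) :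
    E (insert a s) (j + 1) κ = E s (j + 1) κ + κ a * E s j κ := by
  classical
  rw [E, Finset.powersetCard_succ_insert ha, Finset.sum_union, Finset.sum_image]
  · rw [E, E, Finset.mul_sum]
    congr 1
    refine Finset.sum_congr rfl fun t ht => ?_
    rw [Finset.mem_powersetCard] at ht
    rw [Finset.prod_insert (fun hat => ha (ht.1 hat))]
  · intro t ht u hu htu
    rw [Finset.mem_coe, Finset.mem_powersetCard] at ht hu
    have hat : a ∉ t := fun h => ha (ht.1 h)
    have hau : a ∉ u := fun h => ha (hu.1 h)
    rw [← Finset.erase_insert hat, ← Finset.erase_insert hau, htu]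
  · rw [Finset.disjoint_right]
    rintro t ht hts
    simp only [Finset.mem_image] at ht
    obtain ⟨u, hu, rfl⟩ := ht
    rw [Finset.mem_powersetCard] at hts
    exact ha (hts.1 (Finset.mem_insert_self a u))

lemma E_erase {i : ι} {s : Finset ι} (hi : i ∈ s) (j : ℕ) (κ : ι → ℝ) :
    E s (j + 1) κ = E (s.erase i) (j + 1) κ + κ i * E (s.erase i) j κ := by
  conv_lhs => rw [← Finset.insert_erase hi]
  exact E_insert (Finset.notMem_erase i s) j κ

lemma E_one (s : Finset ι) (κ : ι → ℝ) : E s 1 κ = ∑ i ∈ s, κ i := by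
  classical
  induction s using Finset.induction_on with
  | empty => simp [E_of_lt (show (∅ : Finset ι).card < 1 by simp)]
  | insert a s ha ih => rw [show (1:ℕ) = 0 + 1 from rfl, E_insert ha]; simp [ih, Finset.sum_insert ha, add_comm]

end NAux

namespace NAux
set_option linter.unusedSectionVars false

variable {ι : Type*} [DecidableEq ι]

/-- double counting: `∑_{i∈s} E(s∖i, j) = (|s| - j)·E(s,j)`, in additive form. -/
lemma E_sum_erase (s : Finset ι) (j : ℕ) (κ : ι → ℝ) :
    ∑ i ∈ s, E (s.erase i) j κ + (j : ℝ) * E s j κ = (s.card : ℝ) * E s j κ := by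
  induction s using Finset.induction_on generalizing j with
  | empty =>
    rcases Nat.eq_zero_or_pos j with rfl | hj
    · simp
    · rw [E_of_lt (by simpa using hj)]; simp
  | insert a s ha ih =>
    rcases Nat.eq_zero_or_pos j with rfl | hj
    · simp [Finset.card_insert_of_notMem ha]
    obtain ⟨j, rfl⟩ : ∃ j', j = j' + 1 := ⟨j - 1, by omega⟩
    rw [Finset.sum_insert ha, Finset.erase_insert ha]
    have hrw : ∀ i ∈ s, E ((insert a s).erase i) (j + 1) κ
        = E (s.erase i) (j + 1) κ + κ a * E (s.erase i) j κ := by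
      intro i hi
      have hai : a ≠ i := fun h => ha (h ▸ hi)
      rw [Finset.erase_insert_of_ne hai]
      exact E_insert (fun h => ha (Finset.mem_of_mem_erase h)) j κ
    rw [Finset.sum_congr rfl hrw, Finset.sum_add_distrib, ← Finset.mul_sum,
      E_insert ha j κ]
    have h1 := ih (j + 1)
    have h2 := ih j
    have hc : ((insert a s).card : ℝ) = (s.card : ℝ) + 1 := by
      rw [Finset.card_insert_of_notMem ha]; push_cast; ring
    rw [hc]
    push_cast at h1 h2 ⊢
    linear_combination h1 + κ a * h2

lemma E_sq (s : Finset ι) (κ : ι → ℝ) :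
    (E s 1 κ) ^ 2 = ∑ i ∈ s, (κ i) ^ 2 + 2 * E s 2 κ := by
  induction s using Finset.induction_on with
  | empty => rw [E_of_lt (show (∅ : Finset ι).card < 2 by simp)]; simp [E_one]
  | insert a s ha ih =>
    have h2 : E (insert a s) 2 κ = E s 2 κ + κ a * E s 1 κ := E_insert ha 1 κ
    have h1 : E (insert a s) 1 κ = κ a + E s 1 κ := by
      rw [E_one, E_one, Finset.sum_insert ha]
    rw [h1, h2, Finset.sum_insert ha]
    nlinarith [ih]

lemma E_compl {s : Finset ι} {κ : ι → ℝ} (h0 : ∀ i ∈ s, κ i ≠ 0) {a : ℕ} (ha : a ≤ s.card) :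
    E s (s.card - a) κ = (∏ i ∈ s, κ i) * E s a (fun i => (κ i)⁻¹) := by
  rw [E, E, Finset.mul_sum]
  refine Finset.sum_nbij' (fun t => s \ t) (fun t => s \ t) ?_ ?_ ?_ ?_ ?_
  · intro t ht
    rw [Finset.mem_powersetCard] at ht ⊢
    refine ⟨Finset.sdiff_subset, ?_⟩
    rw [Finset.card_sdiff_of_subset ht.1, ht.2, Nat.sub_sub_self ha]
  · intro t ht
    rw [Finset.mem_powersetCard] at ht ⊢
    refine ⟨Finset.sdiff_subset, ?_⟩
    rw [Finset.card_sdiff_of_subset ht.1, ht.2]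
  · intro t ht
    rw [Finset.mem_powersetCard] at ht
    exact Finset.sdiff_sdiff_eq_self ht.1
  · intro t ht
    rw [Finset.mem_powersetCard] at ht
    exact Finset.sdiff_sdiff_eq_self ht.1
  · intro t ht
    rw [Finset.mem_powersetCard] at ht
    have hprod : (∏ i ∈ t, κ i) * ∏ i ∈ s \ t, κ i = ∏ i ∈ s, κ i := by
      rw [mul_comm]; exact Finset.prod_sdiff ht.1
    show (∏ i ∈ t, κ i) = (∏ i ∈ s, κ i) * ∏ i ∈ s \ t, (κ i)⁻¹
    have hdne : (∏ i ∈ s \ t, κ i) ≠ 0 :=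
      Finset.prod_ne_zero_iff.2 fun i hi => h0 i (Finset.mem_sdiff.1 hi).1
    rw [Finset.prod_inv_distrib, eq_comm]
    field_simp
    linear_combination -hprod

lemma E_pos {s : Finset ι} {κ : ι → ℝ} (h : ∀ i ∈ s, 0 < κ i) {j : ℕ} (hj : j ≤ s.card) :
    0 < E s j κ := by
  refine Finset.sum_pos (fun t ht => ?_) (Finset.powersetCard_nonempty_of_le hj)
  rw [Finset.mem_powersetCard] at ht
  exact Finset.prod_pos fun i hi => h i (ht.1 hi)

lemma E_self (s : Finset ι) (κ : ι → ℝ) : E s s.card κ = ∏ i ∈ s, κ i := by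
  rw [E, Finset.powersetCard_self, Finset.sum_singleton]

end NAux

namespace NAux
set_option linter.unusedSectionVars false
open Polynomial

variable {ι : Type*} [DecidableEq ι]

lemma base_E {s : Finset ι} {κ : ι → ℝ} {k : ℕ} (hk : 1 ≤ k) (hcard : s.card = k + 1)
    (h0 : E s k κ = 0) (h1 : 0 < E s (k - 1) κ) : E s (k + 1) κ ≤ 0 := by
  by_contra hlt
  push_neg at hlt
  have hprod : 0 < ∏ i ∈ s, κ i := by
    have := E_self s κ
    rw [hcard] at this
    rwa [this] at hlt
  have hne : ∀ i ∈ s, κ i ≠ 0 := by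
    intro i hi h
    rw [Finset.prod_eq_zero hi h] at hprod
    exact lt_irrefl 0 hprod
  have hc1 := E_compl hne (show 1 ≤ s.card by omega)
  have hc2 := E_compl hne (show 2 ≤ s.card by omega)
  rw [show s.card - 1 = k by omega, h0] at hc1
  rw [show s.card - 2 = k - 1 by omega] at hc2
  have hE1 : E s 1 (fun i => (κ i)⁻¹) = 0 := by
    rcases mul_eq_zero.1 hc1.symm with h | h
    · exact absurd h (ne_of_gt hprod)
    · exact h
  have hE2 : 0 < E s 2 (fun i => (κ i)⁻¹) := by
    by_contra h2
    push_neg at h2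
    nlinarith [hc2, h1, hprod]
  have hsq := E_sq s (fun i => (κ i)⁻¹)
  rw [hE1] at hsq
  have hnn : 0 ≤ ∑ i ∈ s, ((κ i)⁻¹) ^ 2 :=
    Finset.sum_nonneg fun i _ => sq_nonneg _
  nlinarith [hsq, hE2, hnn]

lemma base_multiset (W : Multiset ℝ) (k : ℕ) (hk : 1 ≤ k) (hcard : Multiset.card W = k + 1)
    (h0 : W.esymm k = 0) (h1 : 0 < W.esymm (k - 1)) : W.esymm (k + 1) ≤ 0 := by
  obtain ⟨L, rfl⟩ := Quotient.exists_rep W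
  have huniv : (Finset.univ : Finset (Fin L.length)).val.map L.get = (⟦L⟧ : Multiset ℝ) := by
    have := List.map_get_finRange L
    conv_rhs => rw [← this]
    rfl
  have key : ∀ j : ℕ, Multiset.esymm ⟦L⟧ j
      = E (Finset.univ : Finset (Fin L.length)) j L.get := by
    intro j
    rw [← huniv, Finset.esymm_map_val]
    rfl
  rw [key] at h0 h1 ⊢
  have hcard' : (Finset.univ : Finset (Fin L.length)).card = k + 1 := by
    simpa using hcard
  exact base_E hk hcard' h0 h1

end NAux

namespace NAux
set_option linter.unusedSectionVars false
open Polynomial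

variable {ι : Type*} [DecidableEq ι]

lemma descFactorial_cast_pos {a b : ℕ} (h : b ≤ a) : (0:ℝ) < (a.descFactorial b : ℝ) := by
  have : a.descFactorial b ≠ 0 := by
    rw [Ne, Nat.descFactorial_eq_zero_iff_lt]; omega
  exact_mod_cast Nat.pos_of_ne_zero this

lemma splits_derivative {p : ℝ[X]} (hp : Splits p) (hd : 2 ≤ p.natDegree) :
    Splits (derivative p) ∧ (derivative p).natDegree = p.natDegree - 1 := by
  have hroots : Multiset.card p.roots = p.natDegree := splits_iff_card_roots.1 hp
  have hcard := p.card_roots_le_derivative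
  have hd0 : derivative p ≠ 0 := by
    intro h
    rw [h, roots_zero] at hcard
    simp at hcard
    omega
  have hle : (derivative p).natDegree ≤ p.natDegree - 1 := natDegree_derivative_le p
  have hle2 : Multiset.card (derivative p).roots ≤ (derivative p).natDegree := card_roots' _
  have heq : Multiset.card (derivative p).roots = (derivative p).natDegree ∧
      (derivative p).natDegree = p.natDegree - 1 := by omega
  exact ⟨splits_iff_card_roots.2 heq.1, heq.2⟩

lemma newton_E {s : Finset ι} (κ : ι → ℝ) {k : ℕ} (hk : 1 ≤ k) (hks : k + 1 ≤ s.card)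
    (h1 : 0 < E s (k - 1) κ) (h0 : E s k κ = 0) : E s (k + 1) κ ≤ 0 := by
  set N := s.card with hN
  set f : ℝ[X] := ∏ i ∈ s, (X + C (κ i)) with hf
  have hmonics : ∀ i ∈ s, (X + C (κ i)).Monic := fun i _ => monic_X_add_C (κ i)
  have hmonic : f.Monic := monic_prod_of_monic s _ hmonics
  have hdeg : f.natDegree = N := by
    rw [hf, natDegree_prod_of_monic _ _ hmonics]
    simp [natDegree_X_add_C, hN]
  have hsplits : Splits f :=
    Splits.prod fun i _ => Splits.of_natDegree_le_one (le_of_eq (natDegree_X_add_C (κ i)))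
  have hcoeff : ∀ j, j ≤ N → f.coeff (N - j) = E s j κ := by
    intro j hj
    rw [hf, Finset.prod_X_add_C_coeff s κ (Nat.sub_le N j), show N - (N - j) = j by omega]
    rfl
  set m := N - (k + 1) with hm
  have hiter : ∀ l, l ≤ m → Splits (derivative^[l] f) ∧
      (derivative^[l] f).natDegree = N - l := by
    intro l hl
    induction l with
    | zero => exact ⟨by simpa using hsplits, by simpa using hdeg⟩
    | succ l ih =>
      have ihh := ih (by omega)
      have hd2 : 2 ≤ (derivative^[l] f).natDegree := by omega
      have := splits_derivative ihh.1 hd2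
      rw [Function.iterate_succ_apply']
      exact ⟨this.1, by rw [this.2, ihh.2]; omega⟩
  set g := derivative^[m] f with hg
  obtain ⟨hgs, hgdeg⟩ := hiter m le_rfl
  rw [show N - m = k + 1 by omega] at hgdeg
  have hgcoeff : ∀ j, j ≤ k + 1 → g.coeff (k + 1 - j)
      = ((N - j).descFactorial m : ℝ) * E s j κ := by
    intro j hj
    rw [hg, coeff_iterate_derivative, show k + 1 - j + m = N - j by omega,
      hcoeff j (by omega), nsmul_eq_mul]
  have hlead : g.leadingCoeff = (N.descFactorial m : ℝ) := by
    have h := hgcoeff 0 (by omega)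
    rw [leadingCoeff, hgdeg]
    simpa using h
  have hleadpos : 0 < g.leadingCoeff := by
    rw [hlead]; exact descFactorial_cast_pos (by omega)
  have hre : ∀ j, j ≤ k + 1 → g.coeff (k + 1 - j)
      = g.leadingCoeff * (-1) ^ j * g.roots.esymm j := by
    intro j hj
    have h := Polynomial.coeff_eq_esymm_roots_of_splits hgs
      (show k + 1 - j ≤ g.natDegree by rw [hgdeg]; omega)
    rw [hgdeg, show k + 1 - (k + 1 - j) = j by omega] at h
    exact h
  set W := g.roots.map (fun t : ℝ => -t) with hW
  have hWcard : Multiset.card W = k + 1 := by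
    rw [hW, Multiset.card_map, splits_iff_card_roots.1 hgs, hgdeg]
  have hWe : ∀ j, j ≤ k + 1 →
      g.leadingCoeff * W.esymm j = ((N - j).descFactorial m : ℝ) * E s j κ := by
    intro j hj
    rw [hW, Multiset.esymm_neg]
    have h := hre j hj
    rw [hgcoeff j hj] at h
    rw [← mul_assoc]
    exact h.symm
  have hW0 : W.esymm k = 0 := by
    have h := hWe k (by omega)
    rw [h0, mul_zero] at h
    rcases mul_eq_zero.1 h with h' | h'
    · exact absurd h' (ne_of_gt hleadpos)
    · exact h'
  have hW1 : 0 < W.esymm (k - 1) := by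
    have h := hWe (k - 1) (by omega)
    have hD : (0:ℝ) < ((N - (k - 1)).descFactorial m : ℝ) :=
      descFactorial_cast_pos (by omega)
    have : 0 < g.leadingCoeff * W.esymm (k - 1) := by
      rw [h]; exact mul_pos hD h1
    nlinarith [hleadpos, this]
  have hW2 := base_multiset W k hk hWcard hW0 hW1
  have h := hWe (k + 1) (by omega)
  have hD : (0:ℝ) < ((N - (k + 1)).descFactorial m : ℝ) :=
    descFactorial_cast_pos (by omega)
  nlinarith [hW2, hleadpos, hD, h]

end NAux

namespace NAux
set_option linter.unusedSectionVars false

lemma main_pos {m p : ℕ} (hp : 1 ≤ p) (hpm : p ≤ m) (κ : Fin m → ℝ)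
    (hnn : ∀ s : Finset (Fin m), ∀ j, 1 ≤ j → j + (m - s.card) ≤ p → 0 ≤ E s j κ)
    (hP : 0 < E Finset.univ p κ) :
    ∀ s : Finset (Fin m), ∀ j, 1 ≤ j → j + (m - s.card) ≤ p → 0 < E s j κ := by
  have key : ∀ d : ℕ, ∀ s : Finset (Fin m), ∀ j : ℕ, m - s.card = d → 1 ≤ j →
      j + d ≤ p → 0 < E s j κ := by
    intro d
    induction d using Nat.strong_induction_on with
    | _ d ihd =>
      have inner : ∀ t : ℕ, ∀ s : Finset (Fin m), ∀ j : ℕ, m - s.card = d → 1 ≤ j →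
          j + d ≤ p → p - j ≤ t → 0 < E s j κ := by
        intro t
        induction t with
        | zero =>
          intro s j hsd h1 h2 h3
          have hcard : s.card ≤ m := by
            simpa using Finset.card_le_univ s
          have hs : s = Finset.univ := Finset.eq_univ_of_card s (by rw [Fintype.card_fin]; omega)
          rw [hs, show j = p by omega]
          exact hP
        | succ t iht =>
          intro s j hsd h1 h2 h3
          by_contra hE
          push_neg at hE
          have hE0 : E s j κ = 0 := le_antisymm hE (hnn s j h1 (by omega))
          have hcard : s.card ≤ m := by
            simpa using Finset.card_le_univ s
          rcases eq_or_lt_of_le h2 with htop | hlt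
          · rcases Nat.eq_zero_or_pos d with hd0 | hd1
            · have hs : s = Finset.univ := Finset.eq_univ_of_card s
                (by rw [Fintype.card_fin]; omega)
              rw [hs, show j = p by omega] at hE0
              rw [hE0] at hP
              exact lt_irrefl 0 hP
            · obtain ⟨i, hi⟩ : ∃ i, i ∉ s := by
                by_contra h
                push_neg at h
                have := Finset.eq_univ_iff_forall.2 h
                rw [this] at hsd
                simp [Fintype.card_fin] at hsd
                omega
              have hcs' : (insert i s).card = s.card + 1 := Finset.card_insert_of_notMem hi
              have hds' : m - (insert i s).card = d - 1 := by omega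
              obtain ⟨j', rfl⟩ : ∃ j', j = j' + 1 := ⟨j - 1, by omega⟩
              have hsj : 0 < E (insert i s) (j' + 1) κ :=
                ihd (d - 1) (by omega) _ _ hds' (by omega) (by omega)
              have hsj1 : 0 < E (insert i s) (j' + 1 + 1) κ :=
                ihd (d - 1) (by omega) _ _ hds' (by omega) (by omega)
              have e1 : E (insert i s) (j' + 1) κ = E s (j' + 1) κ + κ i * E s j' κ :=
                E_insert hi j' κ
              have e2 : E (insert i s) (j' + 1 + 1) κ
                  = E s (j' + 1 + 1) κ + κ i * E s (j' + 1) κ := E_insert hi (j' + 1) κ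
              rw [e2, hE0, mul_zero, add_zero] at hsj1
              by_cases hcard2 : j' + 2 ≤ s.card
              · have hEj' : 0 < E s j' κ := by
                  rcases Nat.eq_zero_or_pos j' with rfl | hj'
                  · rw [E_zero]; exact one_pos
                  · have h0' : 0 ≤ E s j' κ := hnn s j' hj' (by omega)
                    rw [e1, hE0, zero_add] at hsj
                    rcases h0'.lt_or_eq with h | h
                    · exact h
                    · rw [← h, mul_zero] at hsj
                      exact absurd hsj (lt_irrefl 0)
                have hnewton := newton_E κ (k := j' + 1) (by omega) (by omega)
                  (by simpa using hEj') hE0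
                linarith
              · have : E s (j' + 1 + 1) κ = 0 := E_of_lt (by omega) κ
                linarith
          · have hsum := E_sum_erase s j κ
            rw [hE0, mul_zero, mul_zero, add_zero] at hsum
            have hterm : ∀ i ∈ s, E (s.erase i) j κ = 0 := by
              have hnn' : ∀ i ∈ s, 0 ≤ E (s.erase i) j κ := fun i hi =>
                hnn _ j h1 (by rw [Finset.card_erase_of_mem hi]; omega)
              exact (Finset.sum_eq_zero_iff_of_nonneg hnn').1 hsum
            have heq : ∀ i ∈ s, E (s.erase i) (j + 1) κ = E s (j + 1) κ := by
              intro i hi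
              have h := E_erase hi j κ
              rw [hterm i hi, mul_zero, add_zero] at h
              exact h.symm
            have hsum1 := E_sum_erase s (j + 1) κ
            rw [Finset.sum_congr rfl heq, Finset.sum_const, nsmul_eq_mul] at hsum1
            have hEj1 : E s (j + 1) κ = 0 := by
              have hjpos : (0:ℝ) < (j : ℝ) + 1 := by positivity
              push_cast at hsum1
              nlinarith [hsum1]
            have hpos : 0 < E s (j + 1) κ := iht s (j + 1) hsd (by omega) (by omega) (by omega)
            linarith
      exact fun s j hsd h1 h2 => inner (p - j) s j hsd h1 h2 le_rfl
  intro s j h1 h2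
  exact key (m - s.card) s j rfl h1 h2

end NAux

/-- Positivity of `σ_{p-2;i}` along a connected space with an elliptic point,
used in the proof of the Minkowski-type inequality. -/
theorem stmt_11 (n p : ℕ) (hn : 3 ≤ n) (hp1 : 2 ≤ p) (hp2 : p ≤ n - 1)
    (X : Type*) [TopologicalSpace X] [ConnectedSpace X]
    (κ : X → Fin (n - 1) → ℝ) (hκ : Continuous κ)
    (hσp : ∀ x, 0 < esymm (n - 1) p (κ x))
    (x₀ : X) (hx₀ : ∀ i, 0 < κ x₀ i) :
    ∀ x, ∀ i : Fin (n - 1), 0 < esymmWithout (n - 1) (p - 2) i (κ x) := by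
  classical
  have hm2 : 2 ≤ n - 1 := by omega
  have hpm : p ≤ n - 1 := hp2
  have hesymm : ∀ (x : X) (j : ℕ), esymm (n - 1) j (κ x) = NAux.E Finset.univ j (κ x) := fun _ _ => rfl
  have hcont : ∀ (s : Finset (Fin (n - 1))) (j : ℕ), Continuous (fun x => NAux.E s j (κ x)) := by
    intro s j
    apply continuous_finset_sum
    intro t _
    exact continuous_finset_prod t fun i _ => (continuous_apply i).comp hκ
  set A : Set X := {x | ∀ s : Finset (Fin (n - 1)), ∀ j : ℕ, 1 ≤ j → j + ((n - 1) - s.card) ≤ p →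
    0 < NAux.E s j (κ x)} with hA
  have hopen : IsOpen A := by
    have hrw : A = ⋂ (s : Finset (Fin (n - 1))), ⋂ (j : Fin (p + 1)),
        {x | 1 ≤ (j : ℕ) → (j : ℕ) + ((n - 1) - s.card) ≤ p → 0 < NAux.E s (j : ℕ) (κ x)} := by
      ext x
      simp only [hA, Set.mem_iInter, Set.mem_setOf_eq]
      constructor
      · intro h s j h1 h2
        exact h s j h1 h2
      · intro h s j h1 h2
        have hjp : j < p + 1 := by omega
        exact h s ⟨j, hjp⟩ h1 h2
    rw [hrw]
    refine isOpen_iInter_of_finite fun s => isOpen_iInter_of_finite fun j => ?_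
    by_cases h1 : 1 ≤ (j : ℕ)
    · by_cases h2 : (j : ℕ) + ((n - 1) - s.card) ≤ p
      · have : {x | 1 ≤ (j : ℕ) → (j : ℕ) + ((n - 1) - s.card) ≤ p → 0 < NAux.E s (j : ℕ) (κ x)}
            = {x | 0 < NAux.E s (j : ℕ) (κ x)} := by
          ext x; simp [h1, h2]
        rw [this]
        exact isOpen_lt continuous_const (hcont s j)
      · have : {x | 1 ≤ (j : ℕ) → (j : ℕ) + ((n - 1) - s.card) ≤ p → 0 < NAux.E s (j : ℕ) (κ x)}
            = Set.univ := by
          ext x; simp [h2]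
        rw [this]; exact isOpen_univ
    · have : {x | 1 ≤ (j : ℕ) → (j : ℕ) + ((n - 1) - s.card) ≤ p → 0 < NAux.E s (j : ℕ) (κ x)}
          = Set.univ := by
        ext x; simp [h1]
      rw [this]; exact isOpen_univ
  have hclosed : IsClosed A := by
    apply isClosed_of_closure_subset
    intro x hx
    have hnn : ∀ s : Finset (Fin (n - 1)), ∀ j, 1 ≤ j → j + ((n - 1) - s.card) ≤ p →
        0 ≤ NAux.E s j (κ x) := by
      intro s j h1 h2
      have hc : IsClosed {y | 0 ≤ NAux.E s j (κ y)} :=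
        isClosed_le continuous_const (hcont s j)
      have hsub : A ⊆ {y | 0 ≤ NAux.E s j (κ y)} := fun y hy => le_of_lt (hy s j h1 h2)
      exact closure_minimal hsub hc hx
    intro s j h1 h2
    refine NAux.main_pos (by omega) hpm (κ x) hnn ?_ s j h1 h2
    rw [← hesymm]
    exact hσp x
  have hx₀A : x₀ ∈ A := by
    intro s j h1 h2
    have hcard : s.card ≤ (n - 1) := by simpa using Finset.card_le_univ s
    exact NAux.E_pos (fun i _ => hx₀ i) (by omega)
  have huniv : A = Set.univ := IsClopen.eq_univ ⟨hclosed, hopen⟩ ⟨x₀, hx₀A⟩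
  intro x i
  have hxA : x ∈ A := by rw [huniv]; trivial
  show 0 < NAux.E (Finset.univ.erase i) (p - 2) (κ x)
  rcases eq_or_lt_of_le hp1 with h2 | h3
  · rw [show p - 2 = 0 by omega, NAux.E_zero]
    exact one_pos
  · have hcd : (Finset.univ.erase i).card = (n - 1) - 1 := by
      rw [Finset.card_erase_of_mem (Finset.mem_univ i)]
      simp
    exact hxA (Finset.univ.erase i) (p - 2) (by omega) (by rw [hcd]; omega)
end
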